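/- arXiv:math/0006065 — 12 statements merged into one kernel-verified Lean document; each statement's English description precedes it below -/
import Mathlib

section
/- If a nilpotent group G of class at most two is generated by elements of exponent n, where n is odd, then every element of G has order dividing n. -/
/-- If a nil-2 group is generated by elements of exponent `n` with `n` odd, then every
element has order dividing `n`. -/
theorem stmt_4 {G : Type*} [Group G] (hG : commutator G ≤ Subgroup.center G)
    (n : ℕ) (hn : Odd n) (S : Set G) (hgen : Subgroup.closure S = ⊤)
    (hS : ∀ s ∈ S, s ^ n = 1) :
    ∀ g : G, g ^ n = 1 := by
  obtain ⟨m, hm⟩ := hn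
  open scoped commutatorElement in
  have key : ∀ a b : G, a ^ n = 1 → b ^ n = 1 → (a * b) ^ n = 1 := by
    intro a b ha hb
    set c : G := ⁅b, a⁆ with hcdef
    have hcmem : c ∈ Subgroup.center G :=
      hG (Subgroup.commutator_mem_commutator (Subgroup.mem_top b) (Subgroup.mem_top a))
    have hc : ∀ g : G, g * c = c * g := fun g => Subgroup.mem_center_iff.mp hcmem g
    have hcom : ∀ g : G, Commute c g := fun g => (hc g).symm
    have hba : b * a = a * b * c := by
      have h1 : c * (a * b) = b * a := by
        simp [hcdef, commutatorElement_def, mul_assoc]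
      rw [← h1, ← hc (a * b)]
    have hpow : ∀ k : ℕ, b ^ k * a = a * b ^ k * c ^ k := by
      intro k
      induction k with
      | zero => simp
      | succ k ih =>
        have hcb : c ^ k * b = b * c ^ k := ((hcom b).pow_left k).eq
        calc b ^ (k + 1) * a = b ^ k * (b * a) := by rw [pow_succ, mul_assoc]
          _ = b ^ k * (a * b * c) := by rw [hba]
          _ = (b ^ k * a) * b * c := by simp [mul_assoc]
          _ = a * b ^ k * c ^ k * b * c := by rw [ih]
          _ = a * b ^ k * (c ^ k * b) * c := by simp [mul_assoc]
          _ = a * b ^ k * (b * c ^ k) * c := by rw [hcb]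
          _ = a * b ^ (k + 1) * c ^ (k + 1) := by rw [pow_succ, pow_succ]; simp [mul_assoc]
    have hcn : c ^ n = 1 := by
      have := hpow n
      rw [hb, one_mul, mul_one] at this
      have := this.symm
      nth_rewrite 2 [← mul_one a] at this
      exact (mul_left_cancel this)
    have hmain : ∀ k : ℕ, (a * b) ^ k = a ^ k * b ^ k * c ^ (k.choose 2) := by
      intro k
      induction k with
      | zero => simp
      | succ k ih =>
        have hcc : ∀ g : G, c ^ (k.choose 2) * g = g * c ^ (k.choose 2) :=
          fun g => (((hcom g).pow_left _).eq)
        have hch : (k + 1).choose 2 = k.choose 2 + k := by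
          rw [Nat.choose_succ_succ k 1, Nat.choose_one_right]
          exact Nat.add_comm _ _
        calc (a * b) ^ (k + 1) = (a * b) ^ k * (a * b) := pow_succ _ _
          _ = a ^ k * b ^ k * c ^ (k.choose 2) * (a * b) := by rw [ih]
          _ = a ^ k * b ^ k * (c ^ (k.choose 2) * a) * b := by simp [mul_assoc]
          _ = a ^ k * b ^ k * (a * c ^ (k.choose 2)) * b := by rw [hcc a]
          _ = a ^ k * (b ^ k * a) * (c ^ (k.choose 2) * b) := by simp [mul_assoc]
          _ = a ^ k * (a * b ^ k * c ^ k) * (b * c ^ (k.choose 2)) := by rw [hpow, hcc b]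
          _ = a ^ (k + 1) * (b ^ k * (c ^ k * b)) * c ^ (k.choose 2) := by
              rw [pow_succ]; simp [mul_assoc]
          _ = a ^ (k + 1) * (b ^ k * (b * c ^ k)) * c ^ (k.choose 2) := by
              rw [((hcom b).pow_left k).eq]
          _ = a ^ (k + 1) * b ^ (k + 1) * c ^ ((k + 1).choose 2) := by
              have hswap : c ^ k * c ^ k.choose 2 = c ^ ((k + 1).choose 2) := by
                rw [← pow_add, hch, Nat.add_comm]
              rw [pow_succ b, ← hswap]; simp [mul_assoc]
    have hchoose : n.choose 2 = n * m := by
      subst hm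
      rw [Nat.choose_two_right]
      rw [show 2 * m + 1 - 1 = 2 * m from by omega,
        show (2 * m + 1) * (2 * m) = (2 * m + 1) * m * 2 from by ring,
        Nat.mul_div_cancel _ (by norm_num)]
    rw [hmain n, ha, hb, hchoose, pow_mul, hcn, one_pow, one_mul, one_mul]
  intro g
  have hg : g ∈ Subgroup.closure S := by rw [hgen]; exact Subgroup.mem_top g
  induction hg using Subgroup.closure_induction with
  | mem s hs => exact hS s hs
  | one => exact one_pow n
  | mul x y _ _ hx hy => exact key x y hx hy
  | inv x _ hx => rw [inv_pow, hx, inv_one]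
end

section
/- If a nilpotent group G of class at most two is generated by elements each of order dividing n, then every element of G has order dividing 2n. -/
open scoped commutatorElement

/-- If a nil-2 group is generated by elements each of order dividing `n`, then every
element has order dividing `2n`. -/
theorem stmt_5 {G : Type*} [Group G] (hG : commutator G ≤ Subgroup.center G)
    (n : ℕ) (hn : 0 < n) (S : Set G) (hgen : Subgroup.closure S = ⊤)
    (hS : ∀ s ∈ S, s ^ n = 1) :
    ∀ g : G, g ^ (2 * n) = 1 := by
  have hcomm : ∀ a b z : G, Commute z ⁅a, b⁆ := by
    intro a b z
    have h : ⁅a, b⁆ ∈ Subgroup.center G :=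
      hG (Subgroup.commutator_mem_commutator (Subgroup.mem_top a) (Subgroup.mem_top b))
    exact (Subgroup.mem_center_iff.mp h z)
  -- bilinearity in the first argument
  have key : ∀ a b c : G, ⁅a * b, c⁆ = ⁅a, c⁆ * ⁅b, c⁆ := by
    intro a b c
    have h1 : ⁅a * b, c⁆ = a * ⁅b, c⁆ * a⁻¹ * ⁅a, c⁆ := by
      simp only [commutatorElement_def]; group
    rw [h1, (hcomm b c a).eq]
    rw [mul_assoc ⁅b, c⁆, mul_inv_cancel, mul_one, (hcomm a c ⁅b, c⁆).eq]
  have keypow : ∀ (a c : G) (k : ℕ), ⁅a ^ k, c⁆ = ⁅a, c⁆ ^ k := by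
    intro a c k
    induction k with
    | zero => simp
    | succ k ih => rw [pow_succ, key, ih, pow_succ]
  -- power formula
  have pow_formula : ∀ (a b : G) (k : ℕ),
      (a * b) ^ k = a ^ k * b ^ k * ⁅b, a⁆ ^ (k.choose 2) := by
    intro a b k
    induction k with
    | zero => simp
    | succ k ih =>
      have hz : ∀ (m : ℕ) (g : G), ⁅b, a⁆ ^ m * g = g * ⁅b, a⁆ ^ m :=
        fun m g => (((hcomm b a g).pow_right m).eq).symm
      have hba : b ^ k * a = ⁅b, a⁆ ^ k * (a * b ^ k) := by
        rw [← keypow b a k]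
        simp only [commutatorElement_def]; group
      have hch : (k + 1).choose 2 = k.choose 2 + k := by
        rw [Nat.choose_succ_succ k 1, Nat.choose_one_right, Nat.add_comm]
      rw [pow_succ, ih, hch, pow_add]
      have e1 : a ^ k * b ^ k * ⁅b, a⁆ ^ k.choose 2 * (a * b)
          = a ^ k * b ^ k * (⁅b, a⁆ ^ k.choose 2 * a) * b := by group
      rw [e1, hz _ a]
      have e2 : a ^ k * b ^ k * (a * ⁅b, a⁆ ^ k.choose 2) * b
          = a ^ k * (b ^ k * a) * (⁅b, a⁆ ^ k.choose 2 * b) := by group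
      rw [e2, hba, hz _ b]
      have e3 : a ^ k * (⁅b, a⁆ ^ k * (a * b ^ k)) * (b * ⁅b, a⁆ ^ k.choose 2)
          = a ^ k * (⁅b, a⁆ ^ k * a) * (b ^ (k + 1) * ⁅b, a⁆ ^ k.choose 2) := by group
      rw [e3, hz k a]
      have e4 : a ^ k * (a * ⁅b, a⁆ ^ k) * (b ^ (k + 1) * ⁅b, a⁆ ^ k.choose 2)
          = a ^ (k + 1) * (⁅b, a⁆ ^ k * b ^ (k + 1)) * ⁅b, a⁆ ^ k.choose 2 := by group
      rw [e4, hz k (b ^ (k + 1))]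
      group
  -- the main induction over the closure
  have main : ∀ g ∈ Subgroup.closure S, g ^ (2 * n) = 1 ∧ ∀ h : G, ⁅g, h⁆ ^ n = 1 := by
    intro g hg
    induction hg using Subgroup.closure_induction with
    | mem s hs =>
      refine ⟨by rw [mul_comm, pow_mul, hS s hs, one_pow], fun h => ?_⟩
      rw [← keypow, hS s hs, commutatorElement_one_left]
    | one => simp
    | mul a b _ _ ha hb =>
      obtain ⟨ha1, ha2⟩ := ha
      obtain ⟨hb1, hb2⟩ := hb
      constructor
      · have hch : (2 * n).choose 2 = n * (2 * n - 1) := by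
          rw [Nat.choose_two_right,
            show 2 * n * (2 * n - 1) = n * (2 * n - 1) * 2 by ring,
            Nat.mul_div_cancel _ (by norm_num)]
        rw [pow_formula, ha1, hb1, hch, pow_mul, hb2 a, one_pow, one_mul, one_mul]
      · intro h
        rw [key, ((hcomm b h ⁅a, h⁆)).mul_pow, ha2 h, hb2 h, one_mul]
    | inv a _ ha =>
      obtain ⟨ha1, ha2⟩ := ha
      constructor
      · rw [inv_pow, ha1, inv_one]
      · intro h
        have h1 := key a a⁻¹ h
        rw [mul_inv_cancel, commutatorElement_one_left] at h1
        rw [eq_inv_of_mul_eq_one_right h1.symm, inv_pow, ha2 h, inv_one]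
  intro g
  exact (main g (hgen ▸ Subgroup.mem_top g)).1
end

section
/- If a nilpotent group K of class at most two is generated by a subgroup G of exponent dividing 2n together with elements of exponent dividing n, then K has exponent dividing 2n. -/
section aux
variable {K : Type*} [Group K]

private lemma aux_comm (g c z : K) (hz : ∀ x : K, z * x = x * z)
    (h : c * g = g * c * z) : ∀ m : ℕ, c ^ m * g = g * c ^ m * z ^ m := by
  have hzp : ∀ (x : K) (m : ℕ), z ^ m * x = x * z ^ m := fun x m =>
    (Commute.pow_left (hz x) m)
  intro m
  induction m with
  | zero => simp
  | succ m ih =>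
    calc c ^ (m+1) * g = c ^ m * (c * g) := by rw [pow_succ, mul_assoc]
    _ = c ^ m * g * c * z := by rw [h]; simp only [mul_assoc]
    _ = g * c ^ m * z ^ m * c * z := by rw [ih]
    _ = g * c ^ m * (z ^ m * c) * z := by simp only [mul_assoc]
    _ = g * c ^ m * (c * z ^ m) * z := by rw [hzp c m]
    _ = g * c ^ (m+1) * z ^ (m+1) := by rw [pow_succ, pow_succ]; simp only [mul_assoc]

private lemma aux_pow (g c z : K) (hz : ∀ x : K, z * x = x * z)
    (h : c * g = g * c * z) : ∀ m : ℕ, (g * c) ^ m = g ^ m * c ^ m * z ^ (m.choose 2) := by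
  have hzp : ∀ (x : K) (m : ℕ), z ^ m * x = x * z ^ m := fun x m =>
    (Commute.pow_left (hz x) m)
  intro m
  induction m with
  | zero => simp
  | succ m ih =>
    have hch : (m+1).choose 2 = m.choose 2 + m := by
      rw [Nat.choose_succ_succ]
      simp [Nat.choose_one_right, Nat.add_comm]
    calc (g * c) ^ (m+1) = g ^ m * c ^ m * z ^ m.choose 2 * (g * c) := by
          rw [pow_succ, ih]
    _ = g ^ m * (c ^ m * g) * c * z ^ m.choose 2 := by
          simp only [mul_assoc]
          rw [hzp (g * c) (m.choose 2)]
          simp only [mul_assoc]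
    _ = g ^ m * (g * c ^ m * z ^ m) * c * z ^ m.choose 2 := by
          rw [aux_comm g c z hz h m]
    _ = g ^ (m+1) * c ^ (m+1) * z ^ ((m+1).choose 2) := by
          rw [hch, pow_succ g, pow_succ c, pow_add]
          simp only [mul_assoc]
          rw [hzp (c * z ^ m.choose 2) m]
          simp only [mul_assoc]

end aux

open scoped commutatorElement

/-- If a nil-2 group `K` is generated by a subgroup `G` of exponent dividing `2n`
together with elements of exponent dividing `n`, then `K` has exponent dividing `2n`. -/
theorem stmt_6 {K : Type*} [Group K] (hK : commutator K ≤ Subgroup.center K)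
    (n : ℕ) (hn : 0 < n) (G : Subgroup K) (S : Set K)
    (hG : ∀ g ∈ G, g ^ (2 * n) = 1) (hS : ∀ s ∈ S, s ^ n = 1)
    (hgen : Subgroup.closure ((G : Set K) ∪ S) = ⊤) :
    ∀ k : K, k ^ (2 * n) = 1 := by
  have hc : ∀ a b : K, ⁅a, b⁆ ∈ Subgroup.center K := fun a b =>
    hK (Subgroup.commutator_mem_commutator (Subgroup.mem_top a) (Subgroup.mem_top b))
  have hcc : ∀ a b x : K, ⁅a, b⁆ * x = x * ⁅a, b⁆ := fun a b x =>
    ((Subgroup.mem_center_iff.mp (hc a b)) x).symm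
  have hsemi : ∀ g c : K, c * g = g * c * ⁅c⁻¹, g⁻¹⁆ := by
    intro g c
    simp only [commutatorElement_def, inv_inv]
    group
  -- if c^n is central then ⁅c⁻¹, g⁻¹⁆ ^ n = 1
  have hDz : ∀ g c : K, c ^ n ∈ Subgroup.center K → ⁅c⁻¹, g⁻¹⁆ ^ n = 1 := by
    intro g c hcn
    have h1 := aux_comm g c ⁅c⁻¹, g⁻¹⁆ (hcc _ _) (hsemi g c) n
    have h2 : c ^ n * g = g * c ^ n := ((Subgroup.mem_center_iff.mp hcn) g).symm
    rw [h2] at h1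
    exact left_eq_mul.mp h1
  -- the binomial coefficient computation
  have hch2 : (2 * n).choose 2 = n * (2 * n - 1) := by
    rw [Nat.choose_two_right, show 2 * n * (2 * n - 1) = 2 * (n * (2 * n - 1)) by ring,
      Nat.mul_div_cancel_left _ (by norm_num)]
  -- the predicate D
  set Dp : K → Prop := fun c => c ^ n ∈ Subgroup.center K ∧ c ^ (2 * n) = 1 with hDpdef
  have hDp1 : Dp 1 := ⟨by simp [Subgroup.one_mem], by simp⟩
  have hDpz : ∀ g c : K, Dp c → Dp ⁅c⁻¹, g⁻¹⁆ := by
    intro g c hcD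
    have hz1 : ⁅c⁻¹, g⁻¹⁆ ^ n = 1 := hDz g c hcD.1
    refine ⟨by rw [hz1]; exact Subgroup.one_mem _, ?_⟩
    rw [mul_comm 2 n, pow_mul, hz1, one_pow]
  have hDpmul : ∀ c d : K, Dp c → Dp d → Dp (c * d) := by
    intro c d hcD hdD
    have hz : ∀ x : K, ⁅d⁻¹, c⁻¹⁆ * x = x * ⁅d⁻¹, c⁻¹⁆ := hcc _ _
    have hrel : d * c = c * d * ⁅d⁻¹, c⁻¹⁆ := hsemi c d
    have hzn : ⁅d⁻¹, c⁻¹⁆ ^ n = 1 := hDz c d hdD.1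
    constructor
    · rw [aux_pow c d _ hz hrel n]
      exact Subgroup.mul_mem _ (Subgroup.mul_mem _ hcD.1 hdD.1)
        (Subgroup.pow_mem _ (hc _ _) _)
    · rw [aux_pow c d _ hz hrel (2 * n), hcD.2, hdD.2, hch2, pow_mul, hzn, one_pow]
      simp
  have hDpinv : ∀ c : K, Dp c → Dp c⁻¹ := by
    intro c hcD
    constructor
    · rw [inv_pow]; exact Subgroup.inv_mem _ hcD.1
    · rw [inv_pow, hcD.2, inv_one]
  -- the subgroup T = G · D
  set T : Subgroup K :=
    { carrier := {k | ∃ g ∈ G, ∃ c, Dp c ∧ k = g * c}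
      one_mem' := ⟨1, G.one_mem, 1, hDp1, by simp⟩
      mul_mem' := by
        rintro a b ⟨g, hg, c, hcD, rfl⟩ ⟨g', hg', c', hcD', rfl⟩
        refine ⟨g * g', G.mul_mem hg hg', c * ⁅c⁻¹, g'⁻¹⁆ * c',
          hDpmul _ _ (hDpmul _ _ hcD (hDpz g' c hcD)) hcD', ?_⟩
        calc g * c * (g' * c') = g * (c * g') * c' := by simp only [mul_assoc]
        _ = g * (g' * c * ⁅c⁻¹, g'⁻¹⁆) * c' := by rw [hsemi g' c]
        _ = g * g' * (c * ⁅c⁻¹, g'⁻¹⁆ * c') := by simp only [mul_assoc]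
      inv_mem' := by
        rintro a ⟨g, hg, c, hcD, rfl⟩
        have hzD : Dp ⁅c, g⁆ := by
          have := hDpz g⁻¹ c⁻¹ (hDpinv c hcD)
          rwa [inv_inv, inv_inv] at this
        refine ⟨g⁻¹, G.inv_mem hg, c⁻¹ * ⁅c, g⁆, hDpmul _ _ (hDpinv c hcD) hzD, ?_⟩
        simp only [commutatorElement_def]
        group } with hT
  have hsub : Subgroup.closure ((G : Set K) ∪ S) ≤ T := by
    rw [Subgroup.closure_le]
    rintro x (hx | hx)
    · exact ⟨x, hx, 1, hDp1, (mul_one x).symm⟩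
    · refine ⟨1, G.one_mem, x, ⟨?_, ?_⟩, (one_mul x).symm⟩
      · rw [hS x hx]; exact Subgroup.one_mem _
      · rw [mul_comm 2 n, pow_mul, hS x hx, one_pow]
  intro k
  obtain ⟨g, hg, c, hcD, rfl⟩ : k ∈ T := hsub (hgen ▸ Subgroup.mem_top k)
  rw [aux_pow g c ⁅c⁻¹, g⁻¹⁆ (hcc _ _) (hsemi g c) (2 * n), hG g hg, hcD.2,
    hch2, pow_mul, hDz g c hcD.1, one_pow]
  simp
end

section
/- Let G be a nilpotent group of class at most two, let K be a nil-2 overgroup of G, and suppose x, y ∈ G satisfy x = rⁿ r' and y = sⁿ s' for some r, s ∈ K and r', s' ∈ [K,K]. If there exist integers a, b, c, j and elements g₁, g₂ ∈ G with g₁ⁿ ≡ xᵃ yᵇ (mod [K,K]) and g₂ⁿ ≡ x^(b+j) y^c (mod [K,K]), then [r,s]^(jn) = [g₁,x][g₂,y]; in particular [r,s]^(jn) ∈ G. -/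
open scoped commutatorElement

section helpers
variable {K : Type*} [Group K] (hK : commutator K ≤ Subgroup.center K)
include hK

omit hK in
lemma czmem (g h : K) : ⁅g, h⁆ ∈ commutator K :=
  Subgroup.commutator_mem_commutator (Subgroup.mem_top g) (Subgroup.mem_top h)

lemma czc {z : K} (hz : z ∈ commutator K) (w : K) : z * w = w * z :=
  ((Subgroup.mem_center_iff.mp (hK hz)) w).symm

lemma cz (g h w : K) : ⁅g, h⁆ * w = w * ⁅g, h⁆ := czc hK (czmem g h) w

lemma ctrivl {z : K} (hz : z ∈ commutator K) (g : K) : ⁅z, g⁆ = 1 := by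
  rw [commutatorElement_eq_one_iff_commute]; exact czc hK hz g

lemma ctrivr {z : K} (hz : z ∈ commutator K) (g : K) : ⁅g, z⁆ = 1 := by
  rw [commutatorElement_eq_one_iff_commute]; exact (czc hK hz g).symm

lemma m2r (g h k : K) : ⁅g, h * k⁆ = ⁅g, h⁆ * ⁅g, k⁆ := by
  have h1 : ⁅g, h * k⁆ = ⁅g, h⁆ * (h * ⁅g, k⁆ * h⁻¹) := by
    simp only [commutatorElement_def]; group
  rw [h1, ← cz hK g k h]; group

lemma m2l (g h k : K) : ⁅g * h, k⁆ = ⁅g, k⁆ * ⁅h, k⁆ := by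
  rw [← inv_inj, commutatorElement_inv, m2r hK, ← commutatorElement_inv g k,
    ← commutatorElement_inv h k, mul_inv_rev]
  exact czc hK ((commutator K).inv_mem (czmem g k)) _

lemma ir (g k : K) : ⁅g, k⁻¹⁆ = ⁅g, k⁆⁻¹ := by
  have := m2r hK g k k⁻¹
  rw [mul_inv_cancel, commutatorElement_one_right] at this
  exact (inv_eq_of_mul_eq_one_right this.symm).symm

lemma zr (g k : K) (m : ℤ) : ⁅g, k ^ m⁆ = ⁅g, k⁆ ^ m := by
  induction m using Int.induction_on with
  | zero => simp
  | succ i ih => rw [zpow_add_one, m2r hK, ih, zpow_add_one]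
  | pred i ih => rw [zpow_sub_one, m2r hK, ih, ir hK, zpow_sub_one]

lemma zl (g k : K) (m : ℤ) : ⁅g ^ m, k⁆ = ⁅g, k⁆ ^ m := by
  rw [← inv_inj, commutatorElement_inv, zr hK, ← commutatorElement_inv g k, inv_zpow]

lemma nr (g k : K) (m : ℕ) : ⁅g, k ^ m⁆ = ⁅g, k⁆ ^ m := by
  have := zr hK g k m; rwa [zpow_natCast, zpow_natCast] at this

lemma nl (g k : K) (m : ℕ) : ⁅g ^ m, k⁆ = ⁅g, k⁆ ^ m := by
  have := zl hK g k m; rwa [zpow_natCast, zpow_natCast] at this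

end helpers

/-- Key lemma: if `x = rⁿ r'` and `y = sⁿ s'` in a nil-2 overgroup `K` of `G`, and the
congruences `g₁ⁿ ≡ xᵃyᵇ`, `g₂ⁿ ≡ x^(b+j)y^c (mod [K,K])` hold with `g₁,g₂ ∈ G`, then
`[r,s]^(jn) = [g₁,x][g₂,y]`; in particular `[r,s]^(jn) ∈ G`. -/
theorem stmt_7 {K : Type*} [Group K] (hK : commutator K ≤ Subgroup.center K)
    (G : Subgroup K) (n : ℕ) (hn : 0 < n)
    (x y r s r' s' : K) (hx : x ∈ G) (hy : y ∈ G)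
    (hr' : r' ∈ commutator K) (hs' : s' ∈ commutator K)
    (hxr : x = r ^ n * r') (hys : y = s ^ n * s')
    (a b c j : ℤ) (g₁ g₂ : K) (hg₁ : g₁ ∈ G) (hg₂ : g₂ ∈ G)
    (h1 : g₁ ^ n * (x ^ a * y ^ b)⁻¹ ∈ commutator K)
    (h2 : g₂ ^ n * (x ^ (b + j) * y ^ c)⁻¹ ∈ commutator K) :
    (r⁻¹ * s⁻¹ * r * s) ^ (j * (n : ℤ)) =
      (g₁⁻¹ * x⁻¹ * g₁ * x) * (g₂⁻¹ * y⁻¹ * g₂ * y) ∧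
    (r⁻¹ * s⁻¹ * r * s) ^ (j * (n : ℤ)) ∈ G := by
  have key : ∀ u v : K, u⁻¹ * v⁻¹ * u * v = ⁅u, v⁆ := by
    intro u v
    have h := cz hK u v (v * u)
    have h2 : ⁅u, v⁆ * (v * u) = u * v := by
      simp only [commutatorElement_def]; group
    calc u⁻¹ * v⁻¹ * u * v = u⁻¹ * v⁻¹ * (⁅u, v⁆ * (v * u)) := by rw [h2]; group
      _ = u⁻¹ * v⁻¹ * ((v * u) * ⁅u, v⁆) := by rw [h]
      _ = ⁅u, v⁆ := by group
  have hxr' : ⁅x, r⁆ = 1 := by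
    rw [hxr, m2l hK, ctrivl hK hr', mul_one, nl hK, commutatorElement_self, one_pow]
  have hxs : ⁅x, s⁆ = ⁅r, s⁆ ^ n := by
    rw [hxr, m2l hK, ctrivl hK hr', mul_one, nl hK]
  have hys' : ⁅y, s⁆ = 1 := by
    rw [hys, m2l hK, ctrivl hK hs', mul_one, nl hK, commutatorElement_self, one_pow]
  have hyr : ⁅y, r⁆ = ⁅s, r⁆ ^ n := by
    rw [hys, m2l hK, ctrivl hK hs', mul_one, nl hK]
  have e1 : g₁ ^ n = (g₁ ^ n * (x ^ a * y ^ b)⁻¹) * (x ^ a * y ^ b) := by group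
  have e2 : g₂ ^ n = (g₂ ^ n * (x ^ (b + j) * y ^ c)⁻¹) * (x ^ (b + j) * y ^ c) := by
    group
  have c1 : ⁅g₁, x⁆ = ⁅r, s⁆ ^ (-((n : ℤ) * b)) := by
    have t1 : ⁅g₁, x⁆ = ⁅g₁ ^ n, r⁆ := by
      rw [hxr, m2r hK, ctrivr hK hr', mul_one, nr hK, nl hK]
    rw [t1, e1, m2l hK, ctrivl hK h1, one_mul, m2l hK, zl hK, zl hK, hxr', hyr,
      ← commutatorElement_inv r s]
    generalize ⁅r, s⁆ = w
    group
  have c2 : ⁅g₂, y⁆ = ⁅r, s⁆ ^ ((n : ℤ) * (b + j)) := by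
    have t2 : ⁅g₂, y⁆ = ⁅g₂ ^ n, s⁆ := by
      rw [hys, m2r hK, ctrivr hK hs', mul_one, nr hK, nl hK]
    rw [t2, e2, m2l hK, ctrivl hK h2, one_mul, m2l hK, zl hK, zl hK, hxs, hys']
    generalize ⁅r, s⁆ = w
    group
  have main : (r⁻¹ * s⁻¹ * r * s) ^ (j * (n : ℤ)) =
      (g₁⁻¹ * x⁻¹ * g₁ * x) * (g₂⁻¹ * y⁻¹ * g₂ * y) := by
    rw [key r s, key g₁ x, key g₂ y, c1, c2, ← zpow_add]
    congr 1; ring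
  refine ⟨main, ?_⟩
  rw [main]
  exact mul_mem (mul_mem (mul_mem (mul_mem (inv_mem hg₁) (inv_mem hx)) hg₁) hx)
    (mul_mem (mul_mem (mul_mem (inv_mem hg₂) (inv_mem hy)) hg₂) hy)
end

section
/- Let G be a nilpotent group of class at most two and g₁, …, g_r central elements of G. For any positive integers n₁, …, n_r there exists a nilpotent group K of class at most two containing G as a subgroup and elements h₁, …, h_r ∈ Z(K) with h_i^(n_i) = g_i for each i. -/
universe u

open scoped IsMulCommutative commutatorElement

section aux
variable {G : Type u} [Group G] {r : ℕ}

/-- The relation homomorphism `v ↦ ((∏ gᵢ^{vᵢ})⁻¹, (mᵢ * vᵢ)ᵢ)`. -/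
def rootF (g : Fin r → G) (hg : ∀ i, g i ∈ Subgroup.center G) (m : Fin r → ℕ) :
    Multiplicative (Fin r → ℤ) →* G × Multiplicative (Fin r → ℤ) where
  toFun v :=
    ((((∏ i, (⟨g i, hg i⟩ : Subgroup.center G) ^ (Multiplicative.toAdd v i))⁻¹ :
        Subgroup.center G) : G),
      Multiplicative.ofAdd fun i => (m i : ℤ) * Multiplicative.toAdd v i)
  map_one' := by
    refine Prod.ext (by simp) ?_
    simp only [toAdd_one, Pi.zero_apply, mul_zero]
    rfl
  map_mul' v w := by
    refine Prod.ext ?_ ?_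
    · push_cast [toAdd_mul, Pi.add_apply, zpow_add, Finset.prod_mul_distrib, mul_inv]
      rfl
    · simp [toAdd_mul, mul_add]
      rfl

end aux

/-- Central elements of a nil-2 group admit central `n_i`-th roots in some nil-2
extension. -/
theorem stmt_8 {G : Type u} [Group G] (hG : commutator G ≤ Subgroup.center G)
    (r : ℕ) (g : Fin r → G) (hg : ∀ i, g i ∈ Subgroup.center G)
    (m : Fin r → ℕ) (hm : ∀ i, 0 < m i) :
    ∃ (K : Type u) (_ : Group K), commutator K ≤ Subgroup.center K ∧
      ∃ φ : G →* K, Function.Injective φ ∧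
        ∃ h : Fin r → K, ∀ i, h i ∈ Subgroup.center K ∧ (h i) ^ (m i) = φ (g i) := by
  classical
  set A := Multiplicative (Fin r → ℤ) with hA
  set H := G × A with hH
  set f := rootF g hg m with hf
  set N : Subgroup H := f.range with hN
  have hNc : N ≤ Subgroup.center H := by
    rintro x ⟨v, rfl⟩
    rw [Subgroup.mem_center_iff]
    intro h
    have hc1 : (f v).1 ∈ Subgroup.center G :=
      SetLike.coe_mem ((∏ i, (⟨g i, hg i⟩ : Subgroup.center G) ^ (Multiplicative.toAdd v i))⁻¹)
    refine Prod.ext ?_ ?_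
    · show (h * f v).1 = (f v * h).1
      rw [Prod.fst_mul, Prod.fst_mul]
      exact Subgroup.mem_center_iff.mp hc1 h.1
    · exact mul_comm _ _
  haveI : N.Normal := ⟨fun n hn h => by
    have hc := Subgroup.mem_center_iff.mp (hNc hn) h
    have he : h * n * h⁻¹ = n := by rw [hc, mul_assoc, mul_inv_cancel, mul_one]
    rw [he]; exact hn⟩
  refine ⟨H ⧸ N, inferInstance, ?_, ?_⟩
  · -- nil-2
    have hcent : ∀ z ∈ Subgroup.center H, (z : H ⧸ N) ∈ Subgroup.center (H ⧸ N) := by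
      intro z hz
      rw [Subgroup.mem_center_iff]
      intro k
      induction k using QuotientGroup.induction_on with
      | H h =>
        rw [← QuotientGroup.mk_mul, ← QuotientGroup.mk_mul,
          Subgroup.mem_center_iff.mp hz h]
    rw [commutator_def, Subgroup.commutator_le]
    intro a _ b _
    induction a using QuotientGroup.induction_on with
    | H a =>
    induction b using QuotientGroup.induction_on with
    | H b =>
    have : (⁅(a : H ⧸ N), (b : H ⧸ N)⁆ : H ⧸ N) = ((⁅a, b⁆ : H) : H ⧸ N) := by
      simp [commutatorElement_def]
    rw [this]
    refine hcent _ ?_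
    rw [Subgroup.mem_center_iff]
    intro h
    refine Prod.ext ?_ ?_
    · have h1 : ⁅a.1, b.1⁆ ∈ Subgroup.center G := by
        refine hG ?_
        exact Subgroup.commutator_mem_commutator (Subgroup.mem_top _) (Subgroup.mem_top _)
      exact Subgroup.mem_center_iff.mp h1 h.1
    · exact mul_comm _ _
  · refine ⟨(QuotientGroup.mk' N).comp (MonoidHom.inl G A), ?_, ?_⟩
    · -- injective
      rw [injective_iff_map_eq_one]
      intro x hx
      have : ((x, (1 : A)) : H) ∈ N := by
        rwa [MonoidHom.comp_apply, MonoidHom.inl_apply, QuotientGroup.mk'_apply,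
          QuotientGroup.eq_one_iff] at hx
      obtain ⟨v, hv⟩ := this
      have h2 : (f v).2 = (1 : A) := by rw [hv]
      have hv0 : v = 1 := by
        have h3 : (fun j => (m j : ℤ) * Multiplicative.toAdd v j) = (0 : Fin r → ℤ) := by
          have := congrArg Multiplicative.toAdd h2
          simpa [hf, rootF] using this
        have h6 : Multiplicative.toAdd v = 0 := by
          funext j
          have h4 := congrFun h3 j
          have h5 : (m j : ℤ) ≠ 0 := by exact_mod_cast (hm j).ne'
          exact (mul_eq_zero.mp h4).resolve_left h5
        simpa using h6
      rw [hv0, map_one] at hv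
      exact (Prod.ext_iff.mp hv.symm).1
    · -- roots
      refine ⟨fun i => ((1, Multiplicative.ofAdd (Pi.single i 1)) : H), fun i => ⟨?_, ?_⟩⟩
      · rw [Subgroup.mem_center_iff]
        intro k
        induction k using QuotientGroup.induction_on with
        | H h =>
          rw [← QuotientGroup.mk_mul, ← QuotientGroup.mk_mul]
          congr 1
          refine Prod.ext ?_ (mul_comm _ _)
          show h.1 * (1 : G) = (1 : G) * h.1
          rw [mul_one, one_mul]
      · show ((((1, Multiplicative.ofAdd (Pi.single i 1)) : H) : H ⧸ N)) ^ (m i)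
            = (((g i, (1 : A)) : H) : H ⧸ N)
        rw [← QuotientGroup.mk_pow, QuotientGroup.eq]
        have htar : ((((1 : G), Multiplicative.ofAdd (Pi.single i 1)) : H) ^ (m i))⁻¹ *
            ((g i, (1 : A)) : H)
            = ((g i, Multiplicative.ofAdd (-((m i : ℤ) • Pi.single i 1))) : H) := by
          refine Prod.ext (by simp) ?_
          show ((Multiplicative.ofAdd (Pi.single i (1 : ℤ))) ^ (m i))⁻¹ * (1 : A)
              = Multiplicative.ofAdd (-((m i : ℤ) • Pi.single i 1))
          rw [mul_one, natCast_zsmul, ofAdd_neg, ofAdd_nsmul]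
        rw [htar]
        refine ⟨Multiplicative.ofAdd (-(Pi.single i (1:ℤ))), ?_⟩
        rw [hf]
        have hp : (∏ j, (⟨g j, hg j⟩ : Subgroup.center G) ^
            ((-(Pi.single i 1) : Fin r → ℤ) j)) =
            (⟨g i, hg i⟩ : Subgroup.center G)⁻¹ := by
          rw [Finset.prod_eq_single i]
          · simp
          · intro j _ hj
            simp [Pi.single_apply, hj]
          · simp
        simp only [rootF, MonoidHom.coe_mk, OneHom.coe_mk, toAdd_ofAdd, Prod.mk.injEq]
        refine ⟨?_, ?_⟩
        · rw [hp]
          simp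
        · congr 1
          funext j
          by_cases hji : j = i
          · subst hji; simp
          · simp [Pi.single_apply, hji]
end

section
/- Let G be a nilpotent group of class at most two and let g ∈ Z(G). Then there exists a nilpotent group K of class at most two containing G as a subgroup such that g ∈ [K,K]. Moreover, if G has odd exponent n, then K may be chosen of exponent n. -/
universe u

namespace Stmt9Aux

open scoped commutatorElement

variable {G : Type u} [Group G] {R : Type} [CommRing R]

def t (f : R →+ Additive (Subgroup.center G)) (r : R) : G :=
  ((Additive.toMul (f r) : Subgroup.center G) : G)

lemma t_comm (f : R →+ Additive (Subgroup.center G)) (r : R) (x : G) :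
    x * t f r = t f r * x :=
  Subgroup.mem_center_iff.mp (Additive.toMul (f r)).2 x

lemma t_add (f : R →+ Additive (Subgroup.center G)) (r s : R) :
    t f (r + s) = t f r * t f s := by simp [t, map_add]

lemma t_zero (f : R →+ Additive (Subgroup.center G)) : t f 0 = 1 := by simp [t]

lemma t_mem (f : R →+ Additive (Subgroup.center G)) (r : R) :
    t f r ∈ Subgroup.center G := (Additive.toMul (f r)).2

section moves
variable (f : R →+ Additive (Subgroup.center G))

-- merge adjacent t's
lemma m1 (w : G) (r s : R) : w * t f r * t f s = w * t f (r + s) := by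
  rw [t_add, mul_assoc]
-- push a t to the right past one letter
lemma m2 (u v : G) (r : R) : u * t f r * v = u * v * t f r := by
  rw [mul_assoc, ← t_comm, ← mul_assoc]
lemma m3 (v : G) (r : R) : t f r * v = v * t f r := (t_comm f r v).symm
lemma m4 (u : G) (r s : R) : u * (t f r * t f s) = u * t f (r + s) := by
  rw [t_add]
end moves

structure Km (f : R →+ Additive (Subgroup.center G)) : Type u where
  x : G
  a : R
  b : R

namespace Km

variable {f : R →+ Additive (Subgroup.center G)}

instance : Mul (Km f) :=
  ⟨fun p q => ⟨p.x * q.x * t f (p.b * q.a), p.a + q.a, p.b + q.b⟩⟩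
instance : One (Km f) := ⟨⟨1, 0, 0⟩⟩
instance : Inv (Km f) := ⟨fun p => ⟨p.x⁻¹ * t f (p.a * p.b), -p.a, -p.b⟩⟩

lemma mul_def (p q : Km f) :
    p * q = ⟨p.x * q.x * t f (p.b * q.a), p.a + q.a, p.b + q.b⟩ := rfl
lemma one_def : (1 : Km f) = ⟨1, 0, 0⟩ := rfl
lemma inv_def (p : Km f) : p⁻¹ = ⟨p.x⁻¹ * t f (p.a * p.b), -p.a, -p.b⟩ := rfl

instance : Group (Km f) := by
  refine Group.ofLeftAxioms ?_ ?_ ?_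
  · rintro ⟨x, a, b⟩ ⟨y, c, d⟩ ⟨z, e, e'⟩
    simp only [mul_def, one_def, Km.mk.injEq]
    refine ⟨?_, by ring, by ring⟩
    rw [m2, m1, ← mul_assoc x (y * z) (t f (d * e)), m1, ← mul_assoc x y z]
    congr 1
    ring_nf
  · rintro ⟨x, a, b⟩
    simp only [mul_def, one_def, Km.mk.injEq]
    refine ⟨?_, by ring, by ring⟩
    rw [zero_mul, t_zero, one_mul, mul_one]
  · rintro ⟨x, a, b⟩
    simp only [mul_def, one_def, inv_def, Km.mk.injEq]
    refine ⟨?_, by ring, by ring⟩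
    rw [m2, m1]
    have h : a * b + -b * a = 0 := by ring
    rw [h, t_zero, mul_one, inv_mul_cancel]

lemma commutator_eq (p q : Km f) :
    ⁅p, q⁆ = ⟨⁅p.x, q.x⁆ * t f (p.b * q.a - p.a * q.b), 0, 0⟩ := by
  rcases p with ⟨x, a, b⟩
  rcases q with ⟨y, c, d⟩
  simp only [commutatorElement_def, mul_def, inv_def, Km.mk.injEq]
  refine ⟨?_, by ring, by ring⟩
  simp only [← mul_assoc]
  rw [m1, m1, m2, m1, m2, m2, m1]
  congr 1
  ring_nf

lemma center_of (z : G) (hz : z ∈ Subgroup.center G) :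
    (⟨z, 0, 0⟩ : Km f) ∈ Subgroup.center (Km f) := by
  rw [Subgroup.mem_center_iff]
  rintro ⟨y, c, d⟩
  simp only [mul_def, Km.mk.injEq]
  refine ⟨?_, by ring, by ring⟩
  rw [mul_zero, zero_mul, t_zero, mul_one, mul_one, Subgroup.mem_center_iff.mp hz y]

lemma pow_eq (p : Km f) (k : ℕ) :
    p ^ k = ⟨p.x ^ k * t f ((k.choose 2 : ℕ) • (p.a * p.b)), k • p.a, k • p.b⟩ := by
  induction k with
  | zero => simp [one_def, t_zero]
  | succ k ih =>
    rw [pow_succ, ih, mul_def]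
    rcases p with ⟨x, a, b⟩
    simp only [Km.mk.injEq]
    refine ⟨?_, by simp [add_smul, add_comm], by simp [add_smul, add_comm]⟩
    rw [m2, m1, ← pow_succ]
    congr 1
    simp only [Nat.choose_succ_succ, Nat.choose_one_right, add_smul, nsmul_eq_mul,
      Nat.cast_add]
    ring_nf

end Km

variable {f : R →+ Additive (Subgroup.center G)}

/-- the canonical embedding. -/
def phi (f : R →+ Additive (Subgroup.center G)) : G →* Km f where
  toFun x := ⟨x, 0, 0⟩
  map_one' := rfl
  map_mul' x y := by simp [Km.mul_def, t_zero]

lemma phi_inj : Function.Injective (phi f) := fun x y h => congrArg Km.x h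

lemma nil2 (hG : commutator G ≤ Subgroup.center G) :
    commutator (Km f) ≤ Subgroup.center (Km f) := by
  rw [commutator_def, Subgroup.commutator_le]
  intro p _ q _
  rw [Km.commutator_eq]
  refine Km.center_of _ (Subgroup.mul_mem _ (hG ?_) (t_mem f _))
  rw [commutator_def]
  exact Subgroup.commutator_mem_commutator (Subgroup.mem_top _) (Subgroup.mem_top _)

lemma phi_g_mem (g : G) (hf1 : t f 1 = g) : phi f g ∈ commutator (Km f) := by
  have h : (⁅(⟨1, 0, 1⟩ : Km f), (⟨1, 1, 0⟩ : Km f)⁆ : Km f) = phi f g := by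
    rw [Km.commutator_eq]
    simp [phi, ← hf1]
  rw [← h, commutator_def]
  exact Subgroup.commutator_mem_commutator (Subgroup.mem_top _) (Subgroup.mem_top _)

lemma exp_n (n : ℕ) (hn : Odd n) (hx : ∀ x : G, x ^ n = 1)
    (hR : ∀ r : R, n • r = 0) (p : Km f) : p ^ n = 1 := by
  rw [Km.pow_eq, Km.one_def]
  obtain ⟨m, hm⟩ := hn
  have hc : n.choose 2 = m * n := by
    rw [Nat.choose_two_right]
    subst hm
    have h2 : 2 * m + 1 - 1 = 2 * m := by omega
    rw [h2]
    have h3 : (2 * m + 1) * (2 * m) = m * (2 * m + 1) * 2 := by ring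
    omega
  have ht : (n.choose 2 : ℕ) • (p.a * p.b) = (0 : R) := by
    have h4 := hR (p.a * p.b)
    rw [nsmul_eq_mul] at h4
    rw [hc, nsmul_eq_mul, Nat.cast_mul, mul_assoc, h4, mul_zero]
  simp [ht, t_zero, hx, hR]

end Stmt9Aux

/-- A central element of a nil-2 group becomes a commutator in some nil-2 extension;
if `G` has odd exponent `n`, the extension may be chosen of exponent `n`. -/
theorem stmt_9 {G : Type u} [Group G] (hG : commutator G ≤ Subgroup.center G)
    (g : G) (hg : g ∈ Subgroup.center G) :
    (∃ (K : Type u) (_ : Group K), commutator K ≤ Subgroup.center K ∧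
      ∃ φ : G →* K, Function.Injective φ ∧ φ g ∈ commutator K) ∧
    (∀ n : ℕ, Odd n → (∀ x : G, x ^ n = 1) →
      ∃ (K : Type u) (_ : Group K), commutator K ≤ Subgroup.center K ∧
        ∃ φ : G →* K, Function.Injective φ ∧ φ g ∈ commutator K ∧
          ∀ k : K, k ^ n = 1) := by
  constructor
  · let g' : Subgroup.center G := ⟨g, hg⟩
    let f : ℤ →+ Additive ↥(Subgroup.center G) :=
      zmultiplesHom _ (Additive.ofMul g')
    have hf1 : Stmt9Aux.t f 1 = g := by
      simp [Stmt9Aux.t, f, zmultiplesHom_apply, g']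
    exact ⟨Stmt9Aux.Km f, inferInstance, Stmt9Aux.nil2 hG, Stmt9Aux.phi f,
      Stmt9Aux.phi_inj, Stmt9Aux.phi_g_mem g hf1⟩
  · intro n hn hx
    let g' : Subgroup.center G := ⟨g, hg⟩
    let F : ℤ →+ Additive ↥(Subgroup.center G) :=
      zmultiplesHom _ (Additive.ofMul g')
    have hgn : g' ^ n = 1 := by
      ext
      push_cast [g']
      exact hx g
    have hFn : F (n : ℤ) = 0 := by
      show (n : ℤ) • Additive.ofMul g' = 0
      rw [natCast_zsmul, ← ofMul_pow, hgn]
      rfl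
    let f : ZMod n →+ Additive ↥(Subgroup.center G) := ZMod.lift n ⟨F, hFn⟩
    have hf1 : Stmt9Aux.t f 1 = g := by
      have h1 : ((1 : ℤ) : ZMod n) = 1 := by push_cast; rfl
      show ((Additive.toMul (f 1) : Subgroup.center G) : G) = g
      rw [← h1]
      show ((Additive.toMul (ZMod.lift n ⟨F, hFn⟩ ((1 : ℤ) : ZMod n)) :
        Subgroup.center G) : G) = g
      rw [ZMod.lift_coe]
      simp [F, zmultiplesHom_apply, g']
    have hR : ∀ r : ZMod n, n • r = 0 := fun r => by
      rw [nsmul_eq_mul, ZMod.natCast_self, zero_mul]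
    exact ⟨Stmt9Aux.Km f, inferInstance, Stmt9Aux.nil2 hG, Stmt9Aux.phi f,
      Stmt9Aux.phi_inj, Stmt9Aux.phi_g_mem g hf1, Stmt9Aux.exp_n n hn hx hR⟩
end

section
/- Let G be a nilpotent group of class at most two of even exponent 2n, and let g ∈ Z(G) with gⁿ = e. Then there exists a nilpotent group K of class at most two, of exponent 2n, containing G as a subgroup, with g ∈ [K,K]. -/
universe u

open scoped commutatorElement

def MyExt (G : Type u) (m : ℕ) : Type u := G × ZMod m × ZMod m

section

variable {G : Type u} [Group G] (m : ℕ) (g : G)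

def extGroup (hc : ∀ a : G, g * a = a * g) (hord : g ^ m = 1) [NeZero m] :
    Group (MyExt G m) where
  mul p q := (p.1 * q.1 * g ^ (p.2.2 * q.2.1).val, p.2.1 + q.2.1, p.2.2 + q.2.2)
  one := (1, 0, 0)
  inv p := (p.1⁻¹ * (g ^ ((p.2.2 * -p.2.1).val))⁻¹, -p.2.1, -p.2.2)
  mul_assoc p q r := by
    have key : ∀ z w : ZMod m, g ^ z.val * g ^ w.val = g ^ (z + w).val := by
      intro z w
      rw [← pow_add, pow_eq_pow_mod _ hord, ← ZMod.val_natCast,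
        Nat.cast_add, ZMod.natCast_rightInverse z, ZMod.natCast_rightInverse w]
    have hcm : ∀ (t : ℕ) (a : G), g ^ t * a = a * g ^ t := fun t a =>
      ((show Commute g a from hc a).pow_left t)
    show ((p.1 * q.1 * g ^ (p.2.2 * q.2.1).val) * r.1
            * g ^ ((p.2.2 + q.2.2) * r.2.1).val,
          p.2.1 + q.2.1 + r.2.1, p.2.2 + q.2.2 + r.2.2)
        = ((p.1 * (q.1 * r.1 * g ^ (q.2.2 * r.2.1).val)
            * g ^ (p.2.2 * (q.2.1 + r.2.1)).val,
          p.2.1 + (q.2.1 + r.2.1), p.2.2 + (q.2.2 + r.2.2)) : G × ZMod m × ZMod m)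
    have e1 : p.2.2 * q.2.1 + (p.2.2 + q.2.2) * r.2.1
        = q.2.2 * r.2.1 + p.2.2 * (q.2.1 + r.2.1) := by ring
    refine Prod.ext ?_ (Prod.ext (add_assoc _ _ _) (add_assoc _ _ _))
    simp only
    rw [mul_assoc (p.1 * q.1) (g ^ _) r.1, hcm _ r.1,
      ← mul_assoc (p.1 * q.1) r.1, mul_assoc (p.1 * q.1 * r.1), key, e1, ← key,
      ← mul_assoc p.1 (q.1 * r.1), ← mul_assoc p.1 q.1 r.1,
      ← mul_assoc (p.1 * q.1 * r.1)]
  one_mul p := by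
    show ((1 * p.1 * g ^ ((0 : ZMod m) * p.2.1).val, 0 + p.2.1, 0 + p.2.2)
        : G × ZMod m × ZMod m) = p
    simp
    rfl
  mul_one p := by
    show ((p.1 * 1 * g ^ (p.2.2 * (0 : ZMod m)).val, p.2.1 + 0, p.2.2 + 0)
        : G × ZMod m × ZMod m) = p
    simp
    rfl
  inv_mul_cancel p := by
    show (((p.1⁻¹ * (g ^ ((p.2.2 * -p.2.1).val))⁻¹) * p.1
            * g ^ ((-p.2.2) * p.2.1).val,
          -p.2.1 + p.2.1, -p.2.2 + p.2.2)
        = ((1, 0, 0) : G × ZMod m × ZMod m))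
    have h1 : (-p.2.2 * p.2.1) = p.2.2 * -p.2.1 := by ring
    have hcm : g ^ ((p.2.2 * -p.2.1).val) * p.1 = p.1 * g ^ ((p.2.2 * -p.2.1).val) :=
      (show Commute g p.1 from hc p.1).pow_left _
    refine Prod.ext ?_ (Prod.ext (neg_add_cancel _) (neg_add_cancel _))
    simp only [h1]
    have hcm' : (g ^ ((p.2.2 * -p.2.1).val))⁻¹ * p.1
        = p.1 * (g ^ ((p.2.2 * -p.2.1).val))⁻¹ :=
      ((show Commute g p.1 from hc p.1).pow_left _).inv_left
    rw [mul_assoc p.1⁻¹, hcm', ← mul_assoc p.1⁻¹ p.1, inv_mul_cancel p.1, one_mul,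
      inv_mul_cancel]

end

/-- If `G` is a nil-2 group of exponent dividing `2n` and `g` is central with `gⁿ = e`,
then there is a nil-2 extension of exponent dividing `2n` in which `g` is a commutator. -/
theorem stmt_10 {G : Type u} [Group G] (hG : commutator G ≤ Subgroup.center G)
    (n : ℕ) (hn : 0 < n) (hexp : ∀ x : G, x ^ (2 * n) = 1)
    (g : G) (hg : g ∈ Subgroup.center G) (hgn : g ^ n = 1) :
    ∃ (K : Type u) (_ : Group K), commutator K ≤ Subgroup.center K ∧
      (∀ k : K, k ^ (2 * n) = 1) ∧
      ∃ φ : G →* K, Function.Injective φ ∧ φ g ∈ commutator K := by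
  have hc : ∀ a : G, g * a = a * g := fun a => (Subgroup.mem_center_iff.mp hg a).symm
  have hord : g ^ (2 * n) = 1 := hexp g
  haveI : NeZero (2 * n) := ⟨by omega⟩
  haveI : Fact (1 < 2 * n) := ⟨by omega⟩
  letI instK : Group (MyExt G (2 * n)) := extGroup (2 * n) g hc hord
  set Z := Subgroup.center G with hZ
  -- basic computation lemmas
  have hmul : ∀ r s : MyExt G (2 * n),
      r * s = ((r.1 * s.1 * g ^ (r.2.2 * s.2.1).val, r.2.1 + s.2.1, r.2.2 + s.2.2)
        : G × ZMod (2 * n) × ZMod (2 * n)) := fun _ _ => rfl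
  have hinv : ∀ r : MyExt G (2 * n),
      r⁻¹ = ((r.1⁻¹ * (g ^ ((r.2.2 * -r.2.1).val))⁻¹, -r.2.1, -r.2.2)
        : G × ZMod (2 * n) × ZMod (2 * n)) := fun _ => rfl
  have hone : (1 : MyExt G (2 * n)) = ((1, 0, 0) : G × ZMod (2 * n) × ZMod (2 * n)) := rfl
  have hkey : ∀ t : ℕ, g ^ ((t : ZMod (2 * n))).val = g ^ t := by
    intro t
    rw [ZMod.val_natCast]
    exact (pow_eq_pow_mod t hord).symm
  -- the quotient G / Z is commutative
  have hcommQ : ∀ α β : G ⧸ Z, α * β = β * α := by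
    intro α β
    induction α using QuotientGroup.induction_on with | H x =>
    induction β using QuotientGroup.induction_on with | H y =>
    show ((x : G ⧸ Z) * y = (y : G ⧸ Z) * x)
    rw [← QuotientGroup.mk_mul, ← QuotientGroup.mk_mul]
    refine (QuotientGroup.eq).mpr ?_
    have h1 : (x * y)⁻¹ * (y * x) = ⁅y⁻¹, x⁻¹⁆ := by group
    rw [h1]
    exact hG (Subgroup.commutator_mem_commutator (Subgroup.mem_top _) (Subgroup.mem_top _))
  refine ⟨MyExt G (2 * n), instK, ?_, ?_, ?_⟩
  · -- nil-2
    rw [commutator_def, Subgroup.commutator_le]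
    intro p _ q _
    have h2' : ⁅p, q⁆.2.1 = 0 := by
      have h2 : ⁅p, q⁆.2.1 = p.2.1 + q.2.1 + -p.2.1 + -q.2.1 := rfl
      rw [h2]; ring
    have h3' : ⁅p, q⁆.2.2 = 0 := by
      have h3 : ⁅p, q⁆.2.2 = p.2.2 + q.2.2 + -p.2.2 + -q.2.2 := rfl
      rw [h3]; ring
    have hc1 : ⁅p, q⁆.1 =
        p.1 * q.1 * g ^ (p.2.2 * q.2.1).val
          * (p.1⁻¹ * (g ^ ((p.2.2 * -p.2.1).val))⁻¹)
          * g ^ (((p.2.2 + q.2.2) * -p.2.1).val)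
          * (q.1⁻¹ * (g ^ ((q.2.2 * -q.2.1).val))⁻¹)
          * g ^ (((p.2.2 + q.2.2 + -p.2.2) * -q.2.1).val) := rfl
    have hfg : ((g : G ⧸ Z)) = 1 := (QuotientGroup.eq_one_iff g).mpr hg
    have hmk : ((⁅p, q⁆.1 : G) : G ⧸ Z) = 1 := by
      rw [hc1]
      simp only [QuotientGroup.mk_mul, QuotientGroup.mk_inv, QuotientGroup.mk_pow, hfg]
      have hab : ((p.1 : G ⧸ Z)) * (q.1 : G ⧸ Z) = (q.1 : G ⧸ Z) * (p.1 : G ⧸ Z) :=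
        hcommQ _ _
      simp only [one_pow, inv_one, mul_one, one_mul]
      rw [hab, mul_assoc ((q.1 : G ⧸ Z)), mul_inv_cancel, mul_one, mul_inv_cancel]
    have hz1 : ⁅p, q⁆.1 ∈ Z := (QuotientGroup.eq_one_iff _).mp hmk
    refine Subgroup.mem_center_iff.mpr fun r => ?_
    rw [hmul, hmul, h2', h3', mul_zero, zero_mul, ZMod.val_zero, pow_zero, mul_one,
      mul_one, add_zero, zero_add, add_zero, zero_add,
      Subgroup.mem_center_iff.mp hz1 r.1]
  · -- exponent 2n
    have hpowf : ∀ (k : MyExt G (2 * n)) (j : ℕ),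
        k ^ j = ((k.1 ^ j * g ^ (j * (j - 1) / 2 * (k.2.2.val * k.2.1.val)),
          (j : ZMod (2 * n)) * k.2.1, (j : ZMod (2 * n)) * k.2.2)
            : G × ZMod (2 * n) × ZMod (2 * n)) := by
      intro k j
      induction j with
      | zero => rw [pow_zero, hone]; norm_num; rfl
      | succ j ih =>
        rw [pow_succ, hmul, ih]
        have hB : ((j : ZMod (2 * n)) * k.2.2) * k.2.1
            = ((j * (k.2.2.val * k.2.1.val) : ℕ) : ZMod (2 * n)) := by
          push_cast
          rw [ZMod.natCast_rightInverse k.2.2, ZMod.natCast_rightInverse k.2.1]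
          ring
        have hcm : ∀ (t : ℕ) (a : G), g ^ t * a = a * g ^ t := fun t a =>
          ((show Commute g a from hc a).pow_left t)
        have hdvd : 2 ∣ j * (j - 1) := by
          rcases j with _ | i
          · simp
          · simpa [Nat.succ_sub_one, mul_comm] using (Nat.even_mul_succ_self i).two_dvd
        have hrel : (j + 1) * (j + 1 - 1) = j * (j - 1) + 2 * j := by
          rcases j with _ | i
          · simp
          · simp only [Nat.succ_sub_one]
            ring
        have h2 : (j + 1) * (j + 1 - 1) / 2 = j * (j - 1) / 2 + j := by omega
        refine Prod.ext ?_ (Prod.ext ?_ ?_) <;> dsimp only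
        · rw [hB, hkey, mul_assoc (k.1 ^ j) _ k.1, hcm, ← mul_assoc (k.1 ^ j) k.1,
            ← pow_succ, mul_assoc (k.1 ^ (j + 1)), ← pow_add]
          congr 2
          rw [h2, add_mul]
        · push_cast; ring
        · push_cast; ring
    intro k
    rw [hpowf, hone]
    have h1 : k.1 ^ (2 * n) = 1 := hexp k.1
    have h2 : (2 * n) * (2 * n - 1) / 2 = n * (2 * n - 1) := by
      have h : 2 * n * (2 * n - 1) = 2 * (n * (2 * n - 1)) := by ring
      rw [h, Nat.mul_div_cancel_left _ (by norm_num)]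
    have h3 : g ^ ((2 * n) * (2 * n - 1) / 2 * (k.2.2.val * k.2.1.val)) = 1 := by
      rw [h2, mul_assoc, pow_mul, hgn, one_pow]
    have h4 : ((2 * n : ℕ) : ZMod (2 * n)) = 0 := ZMod.natCast_self _
    rw [h1, h3, h4, one_mul, zero_mul, zero_mul]
  · -- the embedding
    refine ⟨⟨⟨fun a => ((a, 0, 0) : G × ZMod (2 * n) × ZMod (2 * n)), rfl⟩, ?_⟩, ?_, ?_⟩
    · intro a b
      rw [hmul]
      dsimp only
      rw [zero_mul, ZMod.val_zero, pow_zero, mul_one, add_zero]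
    · intro a b h
      exact congrArg Prod.fst h
    · have hcomm : ⁅(show MyExt G (2 * n) from (1, 0, 1)),
          (show MyExt G (2 * n) from (1, 1, 0))⁆
          = (show MyExt G (2 * n) from (g, 0, 0)) := by
        erw [commutatorElement_def, hinv, hinv, hmul, hmul, hmul]
        refine Prod.ext ?_ (Prod.ext ?_ ?_) <;> dsimp only
        · simp [ZMod.val_one, ZMod.val_zero]
        · simp
        · simp
      rw [commutator_def]
      have hg00 : (show MyExt G (2 * n) from (g, 0, 0))
          ∈ ⁅(⊤ : Subgroup (MyExt G (2 * n))), (⊤ : Subgroup (MyExt G (2 * n)))⁆ := by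
        rw [← hcomm]
        exact Subgroup.commutator_mem_commutator (Subgroup.mem_top _) (Subgroup.mem_top _)
      exact hg00
end

section
/- (Perturbation argument) Let G be a nilpotent group of class at most two, H a subgroup of G, q a positive integer, and x, y ∈ G with x^q, y^q ∈ H[G,G]. Then for any h₁, h₂ ∈ H: [x,y]^q ∈ H if and only if [xh₁, yh₂]^q ∈ H. -/
open scoped commutatorElement in
private lemma comm_mem {G : Type*} [Group G] (a b : G) :
    a⁻¹ * b⁻¹ * a * b ∈ commutator G := by
  have h : a⁻¹ * b⁻¹ * a * b = ⁅a⁻¹, b⁻¹⁆ := by group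
  rw [h]
  exact Subgroup.commutator_mem_commutator (Subgroup.mem_top _) (Subgroup.mem_top _)

private lemma comm_central {G : Type*} [Group G] (hG : commutator G ≤ Subgroup.center G)
    (a b g : G) : g * (a⁻¹ * b⁻¹ * a * b) = (a⁻¹ * b⁻¹ * a * b) * g :=
  (Subgroup.mem_center_iff.mp (hG (comm_mem a b))) g

private lemma comm_mul_left {G : Type*} [Group G] (hG : commutator G ≤ Subgroup.center G)
    (a b d : G) :
    (a * b)⁻¹ * d⁻¹ * (a * b) * d = (a⁻¹ * d⁻¹ * a * d) * (b⁻¹ * d⁻¹ * b * d) := by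
  have h1 : (a * b)⁻¹ * d⁻¹ * (a * b) * d = b⁻¹ * (a⁻¹ * d⁻¹ * a * d) * (d⁻¹ * b * d) := by
    group
  rw [h1, comm_central hG a d b⁻¹]
  group

private lemma comm_mul_right {G : Type*} [Group G] (hG : commutator G ≤ Subgroup.center G)
    (a b d : G) :
    a⁻¹ * (b * d)⁻¹ * a * (b * d) = (a⁻¹ * b⁻¹ * a * b) * (a⁻¹ * d⁻¹ * a * d) := by
  have h1 : a⁻¹ * (b * d)⁻¹ * a * (b * d)
      = (a⁻¹ * d⁻¹ * a) * (a⁻¹ * b⁻¹ * a * b) * d := by group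
  rw [h1, comm_central hG a b (a⁻¹ * d⁻¹ * a)]
  group

private lemma comm_pow_left {G : Type*} [Group G] (hG : commutator G ≤ Subgroup.center G)
    (a b : G) (q : ℕ) : (a⁻¹ * b⁻¹ * a * b) ^ q = (a ^ q)⁻¹ * b⁻¹ * a ^ q * b := by
  induction q with
  | zero => simp
  | succ n ih =>
      rw [pow_succ, ih, pow_succ, comm_mul_left hG (a ^ n) a b]

private lemma comm_pow_right {G : Type*} [Group G] (hG : commutator G ≤ Subgroup.center G)
    (a b : G) (q : ℕ) : (a⁻¹ * b⁻¹ * a * b) ^ q = a⁻¹ * (b ^ q)⁻¹ * a * b ^ q := by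
  induction q with
  | zero => simp
  | succ n ih =>
      rw [pow_succ, ih, pow_succ, comm_mul_right hG a (b ^ n) b]

private lemma comm_central_right {G : Type*} [Group G]
    {c : G} (hc : c ∈ Subgroup.center G) (a h : G) :
    a⁻¹ * (h * c)⁻¹ * a * (h * c) = a⁻¹ * h⁻¹ * a * h := by
  have h1 : a⁻¹ * c = c * a⁻¹ := Subgroup.mem_center_iff.mp hc a⁻¹
  have h2 : (h⁻¹ * a) * c = c * (h⁻¹ * a) := Subgroup.mem_center_iff.mp hc _
  calc a⁻¹ * (h * c)⁻¹ * a * (h * c) = a⁻¹ * c⁻¹ * (h⁻¹ * a) * (h * c) := by group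
    _ = a⁻¹ * c⁻¹ * (c * (h⁻¹ * a) * c⁻¹) * (h * c) := by rw [← h2]; group
    _ = a⁻¹ * h⁻¹ * a * (c⁻¹ * h * c) := by group
    _ = a⁻¹ * h⁻¹ * a * h := by
        have h3 : h * c = c * h := Subgroup.mem_center_iff.mp hc h
        rw [show c⁻¹ * h * c = c⁻¹ * (h * c) by group, h3]; group

/-- Perturbation argument: if `x^q, y^q ∈ H[G,G]` and `h₁, h₂ ∈ H`, then
`[x,y]^q ∈ H ↔ [xh₁, yh₂]^q ∈ H`. -/
theorem stmt_11 {G : Type*} [Group G] (hG : commutator G ≤ Subgroup.center G)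
    (H : Subgroup G) (q : ℕ) (hq : 0 < q) (x y : G)
    (hx : ∃ h ∈ H, ∃ c ∈ commutator G, x ^ q = h * c)
    (hy : ∃ h ∈ H, ∃ c ∈ commutator G, y ^ q = h * c)
    (h₁ h₂ : G) (hh₁ : h₁ ∈ H) (hh₂ : h₂ ∈ H) :
    (x⁻¹ * y⁻¹ * x * y) ^ q ∈ H ↔
      ((x * h₁)⁻¹ * (y * h₂)⁻¹ * (x * h₁) * (y * h₂)) ^ q ∈ H := by
  obtain ⟨hx', hxH, cx, hcx, hxe⟩ := hx
  obtain ⟨hy', hyH, cy, hcy, hye⟩ := hy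
  -- expand the perturbed commutator
  have expand : (x * h₁)⁻¹ * (y * h₂)⁻¹ * (x * h₁) * (y * h₂)
      = (x⁻¹ * (y * h₂)⁻¹ * x * (y * h₂)) * (h₁⁻¹ * (y * h₂)⁻¹ * h₁ * (y * h₂)) :=
    comm_mul_left hG x h₁ (y * h₂)
  have expand2 : x⁻¹ * (y * h₂)⁻¹ * x * (y * h₂)
      = (x⁻¹ * y⁻¹ * x * y) * (x⁻¹ * h₂⁻¹ * x * h₂) := comm_mul_right hG x y h₂
  have expand3 : h₁⁻¹ * (y * h₂)⁻¹ * h₁ * (y * h₂)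
      = (h₁⁻¹ * y⁻¹ * h₁ * y) * (h₁⁻¹ * h₂⁻¹ * h₁ * h₂) := comm_mul_right hG h₁ y h₂
  set A := x⁻¹ * y⁻¹ * x * y with hA
  set B := x⁻¹ * h₂⁻¹ * x * h₂ with hB
  set C := h₁⁻¹ * y⁻¹ * h₁ * y with hC
  set D := h₁⁻¹ * h₂⁻¹ * h₁ * h₂ with hD
  have key : (x * h₁)⁻¹ * (y * h₂)⁻¹ * (x * h₁) * (y * h₂) = A * B * C * D := by
    rw [expand, expand2, expand3]; group
  -- all of A, B, C, D commute pairwise since they are central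
  have cA : ∀ g : G, Commute A g := fun g => (comm_central hG x y g).symm
  have cB : ∀ g : G, Commute B g := fun g => (comm_central hG x h₂ g).symm
  have cC : ∀ g : G, Commute C g := fun g => (comm_central hG h₁ y g).symm
  have powsplit : (A * B * C * D) ^ q = A ^ q * B ^ q * C ^ q * D ^ q := by
    rw [Commute.mul_pow ((cA _).mul_left (cB _) |>.mul_left (cC _)).symm.symm,
        Commute.mul_pow ((cA _).mul_left (cB _)),
        Commute.mul_pow (cA _)]
  -- B^q, C^q, D^q ∈ H
  have hBq : B ^ q ∈ H := by
    have e1 : B ^ q = (x ^ q)⁻¹ * h₂⁻¹ * x ^ q * h₂ := comm_pow_left hG x h₂ q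
    have e2 : (x ^ q)⁻¹ * h₂⁻¹ * x ^ q * h₂
        = (h₂⁻¹ * (x ^ q)⁻¹ * h₂ * x ^ q)⁻¹ := by group
    rw [e1, e2, hxe, comm_central_right (hG hcx) h₂ hx']
    exact H.inv_mem (H.mul_mem (H.mul_mem (H.mul_mem (H.inv_mem hh₂)
      (H.inv_mem hxH)) hh₂) hxH)
  have hCq : C ^ q ∈ H := by
    have e1 : C ^ q = h₁⁻¹ * (y ^ q)⁻¹ * h₁ * y ^ q := comm_pow_right hG h₁ y q
    rw [e1, hye, comm_central_right (hG hcy) h₁ hy']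
    exact H.mul_mem (H.mul_mem (H.mul_mem (H.inv_mem hh₁) (H.inv_mem hyH)) hh₁) hyH
  have hDq : D ^ q ∈ H :=
    H.pow_mem (H.mul_mem (H.mul_mem (H.mul_mem (H.inv_mem hh₁) (H.inv_mem hh₂)) hh₁) hh₂) q
  rw [key, powsplit, H.mul_mem_cancel_right hDq, H.mul_mem_cancel_right hCq,
    H.mul_mem_cancel_right hBq]
end

section
/- Let K be a nilpotent group of class at most two, G ≤ K, and suppose r, s ∈ K, q > 0 are such that r^q, s^q ∈ G[K,K], and suppose r^q is congruent modulo [K,K] to a q-th power of an element of G. Then [r,s]^q ∈ G. -/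
lemma aux_central_conj {K : Type*} [Group K] (c w u v : K)
    (h : ∀ a : K, c * a = a * c) :
    (c * w)⁻¹ * u * (c * w) * v = w⁻¹ * u * w * v := by
  have key : c⁻¹ * u * c = u := by
    rw [show c⁻¹ * u * c = c⁻¹ * (u * c) from by group, ← h u]; group
  calc (c * w)⁻¹ * u * (c * w) * v = w⁻¹ * (c⁻¹ * u * c) * w * v := by group
    _ = w⁻¹ * u * w * v := by rw [key]

lemma aux_comm_pow {K : Type*} [Group K] (x y : K)
    (h : ∀ a : K, (x⁻¹ * y⁻¹ * x * y) * a = a * (x⁻¹ * y⁻¹ * x * y)) (n : ℕ) :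
    (x⁻¹ * y⁻¹ * x * y) ^ n = (x ^ n)⁻¹ * y⁻¹ * x ^ n * y := by
  set z := x⁻¹ * y⁻¹ * x * y with hz
  have h1 : y⁻¹ * x * y = x * z := by rw [hz]; group
  have h2 : y⁻¹ * x ^ n * y = (y⁻¹ * x * y) ^ n := by
    have := conj_pow (i := n) (a := y⁻¹) (b := x)
    simpa using this.symm
  have h3 : (x * z) ^ n = x ^ n * z ^ n := (show Commute x z from (h x).symm).mul_pow n
  have h4 : y⁻¹ * x ^ n * y = x ^ n * z ^ n := by rw [h2, h1, h3]
  have : (x ^ n)⁻¹ * (y⁻¹ * x ^ n * y) = z ^ n := by rw [h4]; group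
  rw [← this]; group

/-- If `r^q, s^q ∈ G[K,K]` and `r^q` is congruent modulo `[K,K]` to a `q`-th power of an
element of `G`, then `[r,s]^q ∈ G`. -/
theorem stmt_12 {K : Type*} [Group K] (hK : commutator K ≤ Subgroup.center K)
    (G : Subgroup K) (q : ℕ) (hq : 0 < q) (r s : K)
    (hr : ∃ g ∈ G, ∃ c ∈ commutator K, r ^ q = g * c)
    (hs : ∃ g ∈ G, ∃ c ∈ commutator K, s ^ q = g * c)
    (hroot : ∃ g ∈ G, r ^ q * (g ^ q)⁻¹ ∈ commutator K) :
    (r⁻¹ * s⁻¹ * r * s) ^ q ∈ G := by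
  -- every commutator-like element is central
  have hcen : ∀ x y : K, ∀ a : K, (x⁻¹ * y⁻¹ * x * y) * a = a * (x⁻¹ * y⁻¹ * x * y) := by
    intro x y a
    have hmem : x⁻¹ * y⁻¹ * x * y ∈ commutator K := by
      open scoped commutatorElement in
      have : ⁅x⁻¹, y⁻¹⁆ ∈ commutator K := by
        rw [commutator_def]
        exact Subgroup.commutator_mem_commutator (Subgroup.mem_top _) (Subgroup.mem_top _)
      open scoped commutatorElement in
      simpa [commutatorElement_def, mul_assoc] using this
    exact ((Subgroup.mem_center_iff.mp (hK hmem)) a).symm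
  obtain ⟨g, hg, hgc⟩ := hroot
  obtain ⟨g', hg', c', hc', hs'⟩ := hs
  set c : K := r ^ q * (g ^ q)⁻¹ with hcdef
  have hcc : ∀ a : K, c * a = a * c := fun a => (Subgroup.mem_center_iff.mp (hK hgc) a).symm
  have hccc : ∀ a : K, c' * a = a * c' := fun a => (Subgroup.mem_center_iff.mp (hK hc') a).symm
  have hrq : r ^ q = c * g ^ q := by rw [hcdef]; group
  have e1 : (r⁻¹ * s⁻¹ * r * s) ^ q = (r ^ q)⁻¹ * s⁻¹ * r ^ q * s :=
    aux_comm_pow r s (hcen r s) q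
  have e2 : (r ^ q)⁻¹ * s⁻¹ * r ^ q * s = (g ^ q)⁻¹ * s⁻¹ * g ^ q * s := by
    rw [hrq]; exact aux_central_conj c (g ^ q) s⁻¹ s hcc
  have e3 : (g ^ q)⁻¹ * s⁻¹ * g ^ q * s = (g⁻¹ * s⁻¹ * g * s) ^ q :=
    (aux_comm_pow g s (hcen g s) q).symm
  have e4 : (g⁻¹ * s⁻¹ * g * s) ^ q = ((s⁻¹ * g⁻¹ * s * g) ^ q)⁻¹ := by
    rw [← inv_pow]; congr 1; group
  have e5 : (s⁻¹ * g⁻¹ * s * g) ^ q = (s ^ q)⁻¹ * g⁻¹ * s ^ q * g :=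
    aux_comm_pow s g (hcen s g) q
  have e6 : (s ^ q)⁻¹ * g⁻¹ * s ^ q * g = g'⁻¹ * g⁻¹ * g' * g := by
    rw [hs', show g' * c' = c' * g' from (hccc g').symm]
    exact aux_central_conj c' g' g⁻¹ g hccc
  rw [e1, e2, e3, e4, e5, e6]
  exact G.inv_mem (G.mul_mem (G.mul_mem (G.mul_mem (G.inv_mem hg') (G.inv_mem hg)) hg') hg)
end

section
/- Let x be an element of a nilpotent group G of class at most two, and suppose x has a k-th root in some nil-2 extension K of G. Then x commutes with every element y ∈ G whose image in G/[G,G] has order dividing k. -/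
/-- If `x ∈ G` has a `k`-th root in a nil-2 extension `K` of `G`, then `x` commutes with
every `y ∈ G` whose image in `G/[G,G]` has order dividing `k`. -/
theorem stmt_14 {K : Type*} [Group K] (hK : commutator K ≤ Subgroup.center K)
    (G : Subgroup K) (k : ℕ) (x : K) (hx : x ∈ G)
    (r : K) (hr : r ^ k = x)
    (y : K) (hy : y ∈ G) (hyk : y ^ k ∈ ⁅G, G⁆) :
    Commute x y := by
  open scoped commutatorElement in set c : K := ⁅r, y⁆ with hc_def
  have hc : ∀ z : K, c * z = z * c := by
    intro z
    have : c ∈ Subgroup.center K :=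
      hK (Subgroup.commutator_mem_commutator (Subgroup.mem_top r) (Subgroup.mem_top y))
    exact (Subgroup.mem_center_iff.mp this z).symm
  have hyc : ∀ z : K, y ^ k * z = z * y ^ k := by
    intro z
    have : y ^ k ∈ Subgroup.center K := by
      refine hK ?_
      have := Subgroup.commutator_mono (le_top : G ≤ ⊤) (le_top : G ≤ ⊤) hyk
      exact this
    exact (Subgroup.mem_center_iff.mp this z).symm
  have hbase : r * y = c * (y * r) := by
    have : c * (y * r) = r * y * r⁻¹ * y⁻¹ * (y * r) := by rw [hc_def]; rfl
    rw [this]; group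
  -- r * y^n = c^n * (y^n * r)
  have key : ∀ n : ℕ, r * y ^ n = c ^ n * (y ^ n * r) := by
    intro n
    induction n with
    | zero => simp
    | succ n ih =>
      rw [pow_succ, pow_succ, ← mul_assoc, ih]
      calc c ^ n * (y ^ n * r) * y = c ^ n * (y ^ n * (r * y)) := by group
        _ = c ^ n * (y ^ n * (c * (y * r))) := by rw [hbase]
        _ = c ^ n * c * (y ^ n * y * r) := by
            rw [← mul_assoc (y ^ n) c, ← hc (y ^ n)]; group
  -- y^k central forces c^k = 1
  have hck : c ^ k = 1 := by
    have h1 : r * y ^ k = c ^ k * (y ^ k * r) := key k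
    have h2 : r * y ^ k = y ^ k * r := (hyc r).symm
    have := h1.symm.trans h2
    exact mul_right_cancel (by rwa [one_mul])
  -- r^n * y = c^n * (y * r^n)
  have key2 : ∀ n : ℕ, r ^ n * y = c ^ n * (y * r ^ n) := by
    intro n
    induction n with
    | zero => simp
    | succ n ih =>
      calc r ^ (n+1) * y = r ^ n * (r * y) := by group
        _ = r ^ n * (c * (y * r)) := by rw [hbase]
        _ = c * (r ^ n * y * r) := by
            rw [← mul_assoc (r ^ n) c, ← hc (r ^ n)]; group
        _ = c * (c ^ n * (y * r ^ n) * r) := by rw [ih]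
        _ = c ^ (n+1) * (y * r ^ (n+1)) := by
            rw [pow_succ, pow_succ]; rw [show c * (c ^ n * (y * r ^ n) * r) = c * c ^ n * (y * (r ^ n * r)) by group, hc (c ^ n)]
  have : x * y = y * x := by
    rw [← hr, key2 k, hck, one_mul]
  exact this
end

section
/- Let G be a nilpotent group of class at most two of exponent n with Z(G) = [G,G]. Then an element x ∈ G has an n-th root in some nil-2 extension of G if and only if x ∈ [G,G]. -/
open scoped commutatorElement

section Aux

variable {K : Type*} [Group K]

private lemma aux_commutator_pow_right (a b : K) (hc : ∀ z : K, ⁅a, b⁆ * z = z * ⁅a, b⁆)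
    (k : ℕ) : ⁅a, b ^ k⁆ = ⁅a, b⁆ ^ k := by
  have hcomm : Commute ⁅a, b⁆ b := hc b
  have h1 : a * b * a⁻¹ = ⁅a, b⁆ * b := by group
  calc ⁅a, b ^ k⁆ = a * b ^ k * a⁻¹ * (b ^ k)⁻¹ := by rw [commutatorElement_def]
    _ = (a * b * a⁻¹) ^ k * (b ^ k)⁻¹ := by rw [conj_pow]
    _ = (⁅a, b⁆ * b) ^ k * (b ^ k)⁻¹ := by rw [h1]
    _ = ⁅a, b⁆ ^ k * b ^ k * (b ^ k)⁻¹ := by rw [hcomm.mul_pow]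
    _ = ⁅a, b⁆ ^ k := by group

private lemma aux_commutator_pow_left (a b : K) (hc : ∀ z : K, ⁅b, a⁆ * z = z * ⁅b, a⁆)
    (k : ℕ) : ⁅a ^ k, b⁆ = ⁅b, a⁆⁻¹ ^ k := by
  have h := aux_commutator_pow_right b a hc k
  calc ⁅a ^ k, b⁆ = ⁅b, a ^ k⁆⁻¹ := by rw [commutatorElement_inv]
    _ = (⁅b, a⁆ ^ k)⁻¹ := by rw [h]
    _ = ⁅b, a⁆⁻¹ ^ k := by rw [inv_pow]

end Aux

/-- In a nil-2 group of exponent `n` with `Z(G) = [G,G]`, an element has an `n`-th root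
in some nil-2 extension if and only if it lies in `[G,G]`. -/
theorem stmt_15 {G : Type u} [Group G] (hZ : Subgroup.center G = commutator G)
    (n : ℕ) (hn : 0 < n) (hexp : ∀ x : G, x ^ n = 1) (x : G) :
    (∃ (K : Type u) (_ : Group K), commutator K ≤ Subgroup.center K ∧
      ∃ φ : G →* K, Function.Injective φ ∧ ∃ r : K, r ^ n = φ x) ↔
    x ∈ commutator G := by
  constructor
  · rintro ⟨K, _, hK, φ, hinj, r, hr⟩
    rw [← hZ, Subgroup.mem_center_iff]
    intro y
    have hcgen : ∀ u v : K, ∀ z : K, ⁅u, v⁆ * z = z * ⁅u, v⁆ := by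
      intro u v z
      have : ⁅u, v⁆ ∈ Subgroup.center K :=
        hK (Subgroup.commutator_mem_commutator (Subgroup.mem_top u) (Subgroup.mem_top v))
      exact (Subgroup.mem_center_iff.mp this z).symm
    have h1 : ⁅r, φ y⁆ ^ n = 1 := by
      rw [← aux_commutator_pow_right r (φ y) (hcgen r (φ y)) n, ← map_pow, hexp y, map_one]
      simp
    have h2 : ⁅φ x, φ y⁆ = 1 := by
      rw [← hr, aux_commutator_pow_left r (φ y) (hcgen (φ y) r) n]
      have : ⁅φ y, r⁆⁻¹ = ⁅r, φ y⁆ := by rw [commutatorElement_inv]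
      rw [this, h1]
    have hcom : Commute (φ x) (φ y) := commutatorElement_eq_one_iff_commute.mp h2
    have : φ (y * x) = φ (x * y) := by rw [map_mul, map_mul, hcom.eq]
    exact hinj this
  · intro hx
    have hxc : x ∈ Subgroup.center G := hZ ▸ hx
    set H := G × Multiplicative ℤ with hH
    set g₀ : H := (x⁻¹, Multiplicative.ofAdd (n : ℤ)) with hg₀
    have hg₀c : g₀ ∈ Subgroup.center H := by
      rw [Subgroup.mem_center_iff]
      rintro ⟨g, m⟩
      have := Subgroup.mem_center_iff.mp (Subgroup.center G |>.inv_mem hxc) g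
      exact Prod.ext this (mul_comm _ _)
    set N : Subgroup H := Subgroup.zpowers g₀ with hN
    have hNc : N ≤ Subgroup.center H := by
      rintro h ⟨k, rfl⟩
      exact Subgroup.zpow_mem _ hg₀c k
    have hNnormal : N.Normal := by
      constructor
      intro h hh g
      have hcen : g * h = h * g := Subgroup.mem_center_iff.mp (hNc hh) g
      rw [hcen, mul_inv_cancel_right]
      exact hh
    refine ⟨H ⧸ N, inferInstance, ?_, ?_⟩
    · -- nil-2
      rw [commutator_def, Subgroup.commutator_le]
      intro a _ b _
      obtain ⟨p, rfl⟩ := QuotientGroup.mk_surjective a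
      obtain ⟨q, rfl⟩ := QuotientGroup.mk_surjective b
      have hpq : (⁅p, q⁆ : H) ∈ Subgroup.center H := by
        obtain ⟨g, m⟩ := p
        obtain ⟨h, l⟩ := q
        have hgh : ⁅g, h⁆ ∈ Subgroup.center G := by
          rw [hZ]
          exact Subgroup.commutator_mem_commutator (Subgroup.mem_top g) (Subgroup.mem_top h)
        rw [Subgroup.mem_center_iff]
        rintro ⟨a, b⟩
        refine Prod.ext ?_ (mul_comm _ _)
        exact Subgroup.mem_center_iff.mp hgh a
      have key : (⁅(↑p : H ⧸ N), ↑q⁆ : H ⧸ N) = ((⁅p, q⁆ : H) : H ⧸ N) := by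
        simp [commutatorElement_def]
      rw [key, Subgroup.mem_center_iff]
      intro c
      obtain ⟨w, rfl⟩ := QuotientGroup.mk_surjective c
      rw [← QuotientGroup.mk_mul, ← QuotientGroup.mk_mul,
        Subgroup.mem_center_iff.mp hpq w]
    · refine ⟨(QuotientGroup.mk' N).comp (MonoidHom.inl G (Multiplicative ℤ)), ?_, ?_⟩
      · rw [injective_iff_map_eq_one]
        intro g hg
        have hmem : ((g, (1 : Multiplicative ℤ)) : H) ∈ N := by
          rwa [MonoidHom.comp_apply, MonoidHom.inl_apply, QuotientGroup.mk'_apply,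
            QuotientGroup.eq_one_iff] at hg
        obtain ⟨k, hk⟩ := hmem
        have hk2 : (Multiplicative.ofAdd ((n : ℤ))) ^ k = (1 : Multiplicative ℤ) :=
          congrArg Prod.snd hk
        have hk0 : k = 0 := by
          have h2 := congrArg Multiplicative.toAdd hk2
          simp only [toAdd_zpow, toAdd_ofAdd, toAdd_one, smul_eq_mul] at h2
          rcases mul_eq_zero.mp h2 with h | h
          · exact h
          · omega
        have hfst := congrArg Prod.fst hk
        rw [hk0] at hfst
        simp at hfst
        exact hfst.symm
      · refine ⟨QuotientGroup.mk ((1 : G), Multiplicative.ofAdd (1 : ℤ)), ?_⟩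
        rw [MonoidHom.comp_apply, MonoidHom.inl_apply, QuotientGroup.mk'_apply,
          ← QuotientGroup.mk_pow, QuotientGroup.eq]
        refine ⟨-1, ?_⟩
        show g₀ ^ (-1 : ℤ) = ((1, Multiplicative.ofAdd 1) ^ n)⁻¹ * ((x, 1) : H)
        rw [zpow_neg_one]
        refine Prod.ext ?_ ?_
        · show (x⁻¹)⁻¹ = (((1 : G)) ^ n)⁻¹ * x
          simp
        · show (Multiplicative.ofAdd ((n : ℤ)))⁻¹ = ((Multiplicative.ofAdd ((1 : ℤ))) ^ n)⁻¹ * 1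
          rw [mul_one, ← ofAdd_nsmul]
          simp
end

section
/- Let G be the group with nil-2 presentation ⟨x, y ∣ x^(pⁿ) = y^(pⁿ) = [x,y]^(p^(n-1)) = e⟩, where p is an odd prime and n > 1. Then G is isomorphic to the subgroup generated by a^p and b^p in the group A = ⟨a, b ∣ a^(p^(n+1)) = b^(p^(n+1)) = [a,b]^(p^(n+1)) = e⟩ (nil-2 presentation), and the element [a,b]^p of A lies in the dominion of that subgroup in A (with respect to the variety of nil-2 groups) but not in the subgroup itself. -/
namespace Stmt19
@[ext] structure M (N : ℕ) where
  x : ZMod N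
  y : ZMod N
  z : ZMod N
namespace M
variable {N : ℕ}
instance : Mul (M N) := ⟨fun u v => ⟨u.x + v.x, u.y + v.y, u.z + v.z - u.y * v.x⟩⟩
instance : One (M N) := ⟨⟨0, 0, 0⟩⟩
instance : Inv (M N) := ⟨fun u => ⟨-u.x, -u.y, -u.z - u.x * u.y⟩⟩
@[simp] lemma mul_x (u v : M N) : (u * v).x = u.x + v.x := rfl
@[simp] lemma mul_y (u v : M N) : (u * v).y = u.y + v.y := rfl
@[simp] lemma mul_z (u v : M N) : (u * v).z = u.z + v.z - u.y * v.x := rfl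
@[simp] lemma one_x : (1 : M N).x = 0 := rfl
@[simp] lemma one_y : (1 : M N).y = 0 := rfl
@[simp] lemma one_z : (1 : M N).z = 0 := rfl
@[simp] lemma inv_x (u : M N) : (u⁻¹).x = -u.x := rfl
@[simp] lemma inv_y (u : M N) : (u⁻¹).y = -u.y := rfl
@[simp] lemma inv_z (u : M N) : (u⁻¹).z = -u.z - u.x * u.y := rfl
instance : Group (M N) where
  mul_assoc u v w := by ext <;> (simp; try ring)
  one_mul u := by ext <;> simp
  mul_one u := by ext <;> simp
  inv_mul_cancel u := by ext <;> (simp; try ring)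

def ex : Multiplicative (ZMod N) →* M N where
  toFun s := ⟨Multiplicative.toAdd s, 0, 0⟩
  map_one' := by ext <;> simp
  map_mul' s t := by ext <;> simp

def ey : Multiplicative (ZMod N) →* M N where
  toFun s := ⟨0, Multiplicative.toAdd s, 0⟩
  map_one' := by ext <;> simp
  map_mul' s t := by ext <;> simp

def ez : Multiplicative (ZMod N) →* M N where
  toFun s := ⟨0, 0, Multiplicative.toAdd s⟩
  map_one' := by ext <;> simp
  map_mul' s t := by ext <;> simp

lemma zpow_ex (t : ZMod N) (i : ℤ) : (⟨t, 0, 0⟩ : M N) ^ i = ⟨(i : ZMod N) * t, 0, 0⟩ := by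
  have h : (⟨t, 0, 0⟩ : M N) = ex (Multiplicative.ofAdd t) := rfl
  rw [h, ← map_zpow, ← ofAdd_zsmul, zsmul_eq_mul]
  rfl

lemma zpow_ey (t : ZMod N) (i : ℤ) : (⟨0, t, 0⟩ : M N) ^ i = ⟨0, (i : ZMod N) * t, 0⟩ := by
  have h : (⟨0, t, 0⟩ : M N) = ey (Multiplicative.ofAdd t) := rfl
  rw [h, ← map_zpow, ← ofAdd_zsmul, zsmul_eq_mul]
  rfl

lemma zpow_ez (t : ZMod N) (i : ℤ) : (⟨0, 0, t⟩ : M N) ^ i = ⟨0, 0, (i : ZMod N) * t⟩ := by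
  have h : (⟨0, 0, t⟩ : M N) = ez (Multiplicative.ofAdd t) := rfl
  rw [h, ← map_zpow, ← ofAdd_zsmul, zsmul_eq_mul]
  rfl

lemma triple (X Y Z : ZMod N) :
    (⟨X, 0, 0⟩ : M N) * ⟨0, Y, 0⟩ * ⟨0, 0, Z⟩ = ⟨X, Y, Z⟩ := by
  ext <;> simp




lemma central (u : M N) (hx0 : u.x = 0) (hy0 : u.y = 0) (w : M N) : u * w = w * u := by
  ext <;> simp [hx0, hy0] <;> ring

lemma nil2 (g₁ g₂ g₃ : M N) :
    (g₁⁻¹ * g₂⁻¹ * g₁ * g₂) * g₃ = g₃ * (g₁⁻¹ * g₂⁻¹ * g₁ * g₂) := by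
  apply central <;> simp <;> ring

def a0 : M N := ⟨1, 0, 0⟩
def b0 : M N := ⟨0, 1, 0⟩
def c0 : M N := ⟨0, 0, 1⟩

lemma a0_pow (t : ℕ) : (a0 : M N) ^ t = ⟨(t : ZMod N), 0, 0⟩ := by
  induction t with
  | zero => ext <;> simp
  | succ t ih => rw [pow_succ, ih]; ext <;> (simp [a0]; try push_cast; try ring)

lemma b0_pow (t : ℕ) : (b0 : M N) ^ t = ⟨0, (t : ZMod N), 0⟩ := by
  induction t with
  | zero => ext <;> simp
  | succ t ih => rw [pow_succ, ih]; ext <;> (simp [b0]; try push_cast; try ring)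

lemma c0_pow (t : ℕ) : (c0 : M N) ^ t = ⟨0, 0, (t : ZMod N)⟩ := by
  induction t with
  | zero => ext <;> simp
  | succ t ih => rw [pow_succ, ih]; ext <;> (simp [c0]; try push_cast; try ring)

lemma a0_pow_self : (a0 : M N) ^ N = 1 := by
  rw [a0_pow]; ext <;> simp
lemma b0_pow_self : (b0 : M N) ^ N = 1 := by
  rw [b0_pow]; ext <;> simp
lemma c0_pow_self : (c0 : M N) ^ N = 1 := by
  rw [c0_pow]; ext <;> simp

lemma comm_a0_b0 : (a0 : M N)⁻¹ * b0⁻¹ * a0 * b0 = c0 := by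
  ext <;> simp [a0, b0, c0]

end M

lemma nil2_of_central {H : Type*} [Group H]
    (h : ∀ g₁ g₂ g₃ : H, (g₁⁻¹ * g₂⁻¹ * g₁ * g₂) * g₃ = g₃ * (g₁⁻¹ * g₂⁻¹ * g₁ * g₂)) :
    commutator H ≤ Subgroup.center H := by
  rw [commutator_def, Subgroup.commutator_le]
  intro g₁ _ g₂ _
  rw [Subgroup.mem_center_iff]
  intro w
  have h2 := h g₁⁻¹ g₂⁻¹ w
  rw [inv_inv, inv_inv] at h2
  rw [commutatorElement_def]
  exact h2.symm





section Comm
variable {H : Type*} [Group H]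

open scoped commutatorElement in
lemma central_of_nil2 (h2 : commutator H ≤ Subgroup.center H) (u v : H) (w : H) :
    (u⁻¹ * v⁻¹ * u * v) * w = w * (u⁻¹ * v⁻¹ * u * v) := by
  have h : u⁻¹ * v⁻¹ * u * v = ⁅u⁻¹, v⁻¹⁆ := by
    rw [commutatorElement_def]; group
  have hm : ⁅u⁻¹, v⁻¹⁆ ∈ commutator H := by
    rw [commutator_def]
    exact Subgroup.commutator_mem_commutator (Subgroup.mem_top _) (Subgroup.mem_top _)
  have := Subgroup.mem_center_iff.mp (h2 hm) w
  rw [h, this]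

variable (u v : H) (hc : ∀ w : H, (u⁻¹ * v⁻¹ * u * v) * w = w * (u⁻¹ * v⁻¹ * u * v))

local notation "c" => u⁻¹ * v⁻¹ * u * v

include hc

lemma hcomm (w : H) : Commute c w := hc w

lemma mvc (t : ℤ) (w₁ w₂ : H) : w₁ * c ^ t * w₂ = w₁ * w₂ * c ^ t := by
  rw [mul_assoc, ((hcomm u v hc w₂).zpow_left t).eq, ← mul_assoc]

lemma conj1 : v⁻¹ * u * v = u * c := by group

lemma conj2 (i : ℤ) : v⁻¹ * u ^ i * v = u ^ i * c ^ i := by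
  have h1 : v⁻¹ * u ^ i * v = (v⁻¹ * u * v) ^ i := by
    have := conj_zpow (i := i) (a := v⁻¹) (b := u)
    simpa using this.symm
  rw [h1, conj1 u v hc, ((hcomm u v hc u).symm).mul_zpow]

lemma conj2' (i : ℤ) : v * u ^ i * v⁻¹ = u ^ i * c ^ (-i : ℤ) := by
  have h2 := conj2 u v hc i
  have h4 : v * (u ^ i * c ^ i) * v⁻¹ = v * u ^ i * v⁻¹ * c ^ i := by
    rw [← mul_assoc]; exact mvc u v hc i (v * u ^ i) v⁻¹
  have h5 : v * u ^ i * v⁻¹ * c ^ i = u ^ i := by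
    rw [← h4, ← h2]; group
  rw [zpow_neg]
  exact eq_mul_inv_of_mul_eq h5

lemma conj3 (i j : ℤ) : (v ^ j)⁻¹ * u ^ i * v ^ j = u ^ i * c ^ (i * j) := by
  induction j using Int.induction_on with
  | zero => simp
  | succ j ih =>
      have hz : v ^ ((j : ℤ) + 1) = v ^ (j : ℤ) * v := zpow_add_one v j
      rw [hz, mul_inv_rev]
      have e1 : v⁻¹ * (v ^ (j:ℤ))⁻¹ * u ^ i * (v ^ (j:ℤ) * v) =
          v⁻¹ * ((v ^ (j:ℤ))⁻¹ * u ^ i * v ^ (j:ℤ)) * v := by group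
      rw [e1, ih, ← mul_assoc, mvc u v hc (i * j) (v⁻¹ * u ^ i) v, conj2 u v hc i,
        mul_assoc, ← zpow_add]
      ring_nf
  | pred j ih =>
      have hz : v ^ ((-j : ℤ) - 1) = v ^ (-j : ℤ) * v⁻¹ := zpow_sub_one v (-j)
      rw [hz, mul_inv_rev, inv_inv]
      have e1 : v * (v ^ (-j:ℤ))⁻¹ * u ^ i * (v ^ (-j:ℤ) * v⁻¹) =
          v * ((v ^ (-j:ℤ))⁻¹ * u ^ i * v ^ (-j:ℤ)) * v⁻¹ := by group
      rw [e1, ih, ← mul_assoc, mvc u v hc (i * (-j)) (v * u ^ i) v⁻¹, conj2' u v hc i,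
        mul_assoc, ← zpow_add]
      ring_nf

lemma L4 (i j : ℤ) : (u ^ i)⁻¹ * (v ^ j)⁻¹ * u ^ i * v ^ j = c ^ (i * j) := by
  have h := conj3 u v hc i j
  calc (u ^ i)⁻¹ * (v ^ j)⁻¹ * u ^ i * v ^ j
      = (u ^ i)⁻¹ * ((v ^ j)⁻¹ * u ^ i * v ^ j) := by group
    _ = (u ^ i)⁻¹ * (u ^ i * c ^ (i * j)) := by rw [h]
    _ = c ^ (i * j) := by group

lemma L4n (i j : ℕ) : (u ^ i)⁻¹ * (v ^ j)⁻¹ * u ^ i * v ^ j = c ^ (i * j) := by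
  have h := L4 u v hc (i : ℤ) (j : ℤ)
  rw [zpow_natCast, zpow_natCast] at h
  rw [h, ← zpow_natCast (u⁻¹ * v⁻¹ * u * v) (i * j)]
  norm_cast

lemma swap (i j : ℤ) : v ^ j * u ^ i = u ^ i * v ^ j * c ^ (-(i * j)) := by
  have h := conj3 u v hc i j
  have h2 : u ^ i * v ^ j = v ^ j * (u ^ i * c ^ (i * j)) := by rw [← h]; group
  rw [zpow_neg]
  apply eq_mul_inv_of_mul_eq
  rw [h2]; group

lemma form_mul (i j k i' j' k' : ℤ) :
    (u ^ i * v ^ j * c ^ k) * (u ^ i' * v ^ j' * c ^ k') =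
      u ^ (i + i') * v ^ (j + j') * c ^ (k + k' - i' * j) := by
  calc (u ^ i * v ^ j * c ^ k) * (u ^ i' * v ^ j' * c ^ k')
      = u ^ i * (v ^ j * u ^ i') * (v ^ j' * (c ^ k * c ^ k')) := by
        rw [show (u ^ i * v ^ j * c ^ k) * (u ^ i' * v ^ j' * c ^ k') =
          ((u ^ i * v ^ j) * c ^ k * u ^ i') * v ^ j' * c ^ k' from by group,
          mvc u v hc k (u ^ i * v ^ j) (u ^ i'),
          show u ^ i * v ^ j * u ^ i' * c ^ k * v ^ j' * c ^ k' =
            (u ^ i * v ^ j * u ^ i') * c ^ k * v ^ j' * c ^ k' from by group,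
          mvc u v hc k (u ^ i * v ^ j * u ^ i') (v ^ j')]
        group
    _ = u ^ i * (u ^ i' * v ^ j * c ^ (-(i' * j))) * (v ^ j' * (c ^ k * c ^ k')) := by
        rw [swap u v hc i' j]
    _ = ((u ^ i * u ^ i') * v ^ j) * c ^ (-(i' * j)) * (v ^ j') * (c ^ k * c ^ k') := by
        group
    _ = ((u ^ i * u ^ i') * v ^ j) * (v ^ j') * c ^ (-(i' * j)) * (c ^ k * c ^ k') := by
        rw [mvc u v hc (-(i' * j)) (u ^ i * u ^ i' * v ^ j) (v ^ j')]
    _ = u ^ (i + i') * v ^ (j + j') * c ^ (k + k' - i' * j) := by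
        rw [← zpow_add, ← zpow_add]
        rw [show ((k : ℤ) + k' - i' * j) = -(i' * j) + (k + k') from by ring, zpow_add,
          zpow_add]
        group

lemma form_inv (i j k : ℤ) :
    (u ^ i * v ^ j * c ^ k)⁻¹ = u ^ (-i) * v ^ (-j) * c ^ (-k - i * j) := by
  apply inv_eq_of_mul_eq_one_right
  rw [form_mul u v hc i j k (-i) (-j) (-k - i * j)]
  rw [show (i + -i : ℤ) = 0 from by ring, show (j + -j : ℤ) = 0 from by ring,
    show (k + (-k - i * j) - -i * j : ℤ) = 0 from by ring]
  group

end Comm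

end Stmt19


open Stmt19


/-- Let `A` be the nil-2 presented group `⟨a,b ∣ a^(p^(n+1)) = b^(p^(n+1)) =
[a,b]^(p^(n+1)) = e⟩` (characterized by generation, the relations, and the universal
property among nil-2 groups), and let `G` be the nil-2 presented group
`⟨x,y ∣ x^(pⁿ) = y^(pⁿ) = [x,y]^(p^(n-1)) = e⟩`.  Then `G` is isomorphic to the subgroup
of `A` generated by `a^p` and `b^p`, and `[a,b]^p` lies in the nil-2 dominion of that
subgroup in `A` but not in the subgroup itself. -/
theorem stmt_19 {A G : Type u} [Group A] [Group G]
    (p n : ℕ) (hp : p.Prime) (hodd : Odd p) (hn : 1 < n)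
    (a b : A)
    (hA2 : commutator A ≤ Subgroup.center A)
    (ha : a ^ p ^ (n + 1) = 1) (hb : b ^ p ^ (n + 1) = 1)
    (hab : (a⁻¹ * b⁻¹ * a * b) ^ p ^ (n + 1) = 1)
    (hAgen : Subgroup.closure {a, b} = ⊤)
    (hAuniv : ∀ (H : Type u) (_ : Group H), commutator H ≤ Subgroup.center H →
      ∀ α β : H, α ^ p ^ (n + 1) = 1 → β ^ p ^ (n + 1) = 1 →
        (α⁻¹ * β⁻¹ * α * β) ^ p ^ (n + 1) = 1 →
        ∃ f : A →* H, f a = α ∧ f b = β)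
    (x y : G)
    (hG2 : commutator G ≤ Subgroup.center G)
    (hx : x ^ p ^ n = 1) (hy : y ^ p ^ n = 1)
    (hxy : (x⁻¹ * y⁻¹ * x * y) ^ p ^ (n - 1) = 1)
    (hGgen : Subgroup.closure {x, y} = ⊤)
    (hGuniv : ∀ (H : Type u) (_ : Group H), commutator H ≤ Subgroup.center H →
      ∀ α β : H, α ^ p ^ n = 1 → β ^ p ^ n = 1 →
        (α⁻¹ * β⁻¹ * α * β) ^ p ^ (n - 1) = 1 →
        ∃ f : G →* H, f x = α ∧ f y = β) :
    Nonempty (G ≃* (Subgroup.closure {a ^ p, b ^ p} : Subgroup A)) ∧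
    (a⁻¹ * b⁻¹ * a * b) ^ p ∉ Subgroup.closure {a ^ p, b ^ p} ∧
    (∀ (C : Type u) (_ : Group C), commutator C ≤ Subgroup.center C →
      ∀ f g : A →* C, (∀ z ∈ Subgroup.closure {a ^ p, b ^ p}, f z = g z) →
        f ((a⁻¹ * b⁻¹ * a * b) ^ p) = g ((a⁻¹ * b⁻¹ * a * b) ^ p)) := by
  obtain ⟨n2, rfl⟩ : ∃ n2, n = n2 + 2 := ⟨n - 2, by omega⟩
  set n := n2 + 2 with hn2
  have hp0 : (p : ℤ) ≠ 0 := by exact_mod_cast hp.pos.ne'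
  set m : ℕ := p ^ (n + 1) with hmdef
  haveI : NeZero m := ⟨pow_ne_zero _ hp.pos.ne'⟩
  -- the homomorphism ψ : A →* M m
  have hUnil : ∀ g₁ g₂ g₃ : ULift.{u} (M m),
      (g₁⁻¹ * g₂⁻¹ * g₁ * g₂) * g₃ = g₃ * (g₁⁻¹ * g₂⁻¹ * g₁ * g₂) := by
    intro g₁ g₂ g₃
    apply (MulEquiv.ulift (α := M m)).injective
    simp only [map_mul, map_inv]
    exact M.nil2 _ _ _
  have hUcent : commutator (ULift.{u} (M m)) ≤ Subgroup.center _ := nil2_of_central hUnil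
  obtain ⟨f0, hf0a, hf0b⟩ := hAuniv (ULift.{u} (M m)) inferInstance hUcent
    ((MulEquiv.ulift (α := M m)).symm M.a0) ((MulEquiv.ulift (α := M m)).symm M.b0)
    (by
      apply (MulEquiv.ulift (α := M m)).injective
      rw [map_pow, MulEquiv.apply_symm_apply, map_one]
      exact M.a0_pow_self)
    (by
      apply (MulEquiv.ulift (α := M m)).injective
      rw [map_pow, MulEquiv.apply_symm_apply, map_one]
      exact M.b0_pow_self)
    (by
      apply (MulEquiv.ulift (α := M m)).injective
      rw [map_pow, map_mul, map_mul, map_mul, map_inv, map_inv,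
        MulEquiv.apply_symm_apply, MulEquiv.apply_symm_apply, map_one,
        M.comm_a0_b0]
      exact M.c0_pow_self)
  set ψ : A →* M m := (MulEquiv.ulift (α := M m)).toMonoidHom.comp f0 with hψdef
  have hψa : ψ a = M.a0 := by
    simp [hψdef, hf0a]
  have hψb : ψ b = M.b0 := by
    simp [hψdef, hf0b]
  have hψc : ψ (a⁻¹ * b⁻¹ * a * b) = M.c0 := by
    rw [map_mul, map_mul, map_mul, map_inv, map_inv, hψa, hψb, M.comm_a0_b0]
  -- the homomorphism φ : G →* A
  have hcA := central_of_nil2 hA2 a b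
  obtain ⟨φ, hφx, hφy⟩ := hGuniv A inferInstance hA2 (a ^ p) (b ^ p)
    (by rw [← pow_mul, show p * p ^ n = p ^ (n + 1) by ring]; exact ha)
    (by rw [← pow_mul, show p * p ^ n = p ^ (n + 1) by ring]; exact hb)
    (by
      rw [L4n a b hcA p p, ← pow_mul,
        show p * p * p ^ (n - 1) = p ^ (n + 1) by simp [hn2]; ring]
      exact hab)
  have hcG := central_of_nil2 hG2 x y
  have hform : ∀ g : G, ∃ i j k : ℤ, g = x ^ i * y ^ j * (x⁻¹ * y⁻¹ * x * y) ^ k := by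
    let T : Subgroup G :=
      { carrier := {g | ∃ i j k : ℤ, g = x ^ i * y ^ j * (x⁻¹ * y⁻¹ * x * y) ^ k}
        one_mem' := ⟨0, 0, 0, by simp⟩
        mul_mem' := by
          rintro g h ⟨i, j, k, rfl⟩ ⟨i', j', k', rfl⟩
          exact ⟨i + i', j + j', k + k' - i' * j, form_mul x y hcG i j k i' j' k'⟩
        inv_mem' := by
          rintro g ⟨i, j, k, rfl⟩
          exact ⟨-i, -j, -k - i * j, form_inv x y hcG i j k⟩ }
    have hle : (⊤ : Subgroup G) ≤ T := by
      rw [← hGgen]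
      apply (Subgroup.closure_le T).mpr
      rintro z (rfl | rfl)
      · exact ⟨1, 0, 0, by simp⟩
      · exact ⟨0, 1, 0, by simp⟩
    exact fun g => hle (Subgroup.mem_top g)
  have hφc : φ (x⁻¹ * y⁻¹ * x * y) = (a⁻¹ * b⁻¹ * a * b) ^ (p * p) := by
    rw [map_mul, map_mul, map_mul, map_inv, map_inv, hφx, hφy]
    exact L4n a b hcA p p
  have hψφx : ψ (φ x) = ⟨(p : ZMod m), 0, 0⟩ := by
    rw [hφx, map_pow, hψa, M.a0_pow]
  have hψφy : ψ (φ y) = ⟨0, (p : ZMod m), 0⟩ := by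
    rw [hφy, map_pow, hψb, M.b0_pow]
  have hψφc : ψ (φ (x⁻¹ * y⁻¹ * x * y)) = ⟨0, 0, ((p * p : ℕ) : ZMod m)⟩ := by
    rw [hφc, map_pow, hψc, M.c0_pow]
  have hker : ∀ g : G, φ g = 1 → g = 1 := by
    intro g hg
    obtain ⟨i, j, k, rfl⟩ := hform g
    have h1 : φ x ^ i * φ y ^ j * φ (x⁻¹ * y⁻¹ * x * y) ^ k = 1 := by
      rw [← map_zpow, ← map_zpow, ← map_zpow, ← map_mul, ← map_mul]; exact hg
    have h0 := congrArg ψ h1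
    rw [map_one, map_mul, map_mul, map_zpow, map_zpow, map_zpow] at h0
    rw [hψφx, hψφy, hψφc, M.zpow_ex, M.zpow_ey, M.zpow_ez, M.triple] at h0
    have hX : ((i : ZMod m) * (p : ZMod m)) = 0 := by
      have := congrArg M.x h0; simpa using this
    have hY : ((j : ZMod m) * (p : ZMod m)) = 0 := by
      have := congrArg M.y h0; simpa using this
    have hZ : ((k : ZMod m) * ((p * p : ℕ) : ZMod m)) = 0 := by
      have := congrArg M.z h0; simpa using this
    have hdx : ((p : ℤ) ^ (n + 1)) ∣ i * p := by
      have : ((i * p : ℤ) : ZMod m) = 0 := by push_cast; exact_mod_cast hX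
      have h2 := (ZMod.intCast_zmod_eq_zero_iff_dvd _ _).mp this
      rw [hmdef] at h2; exact_mod_cast h2
    have hdy : ((p : ℤ) ^ (n + 1)) ∣ j * p := by
      have : ((j * p : ℤ) : ZMod m) = 0 := by push_cast; exact_mod_cast hY
      have h2 := (ZMod.intCast_zmod_eq_zero_iff_dvd _ _).mp this
      rw [hmdef] at h2; exact_mod_cast h2
    have hdz : ((p : ℤ) ^ (n + 1)) ∣ k * (p * p) := by
      have : ((k * (p * p) : ℤ) : ZMod m) = 0 := by push_cast; exact_mod_cast hZ
      have h2 := (ZMod.intCast_zmod_eq_zero_iff_dvd _ _).mp this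
      rw [hmdef] at h2; exact_mod_cast h2
    have hxi : x ^ i = 1 := by
      have hdi : ((p : ℤ) ^ n) ∣ i := by
        have h' : (p : ℤ) ^ n * p ∣ i * p := by rw [← pow_succ]; exact hdx
        exact (mul_dvd_mul_iff_right hp0).mp h'
      obtain ⟨t, rfl⟩ := hdi
      rw [zpow_mul, show ((p : ℤ) ^ n) = ((p ^ n : ℕ) : ℤ) by push_cast; ring,
        zpow_natCast, hx, one_zpow]
    have hyj : y ^ j = 1 := by
      have hdj : ((p : ℤ) ^ n) ∣ j := by
        have h' : (p : ℤ) ^ n * p ∣ j * p := by rw [← pow_succ]; exact hdy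
        exact (mul_dvd_mul_iff_right hp0).mp h'
      obtain ⟨t, rfl⟩ := hdj
      rw [zpow_mul, show ((p : ℤ) ^ n) = ((p ^ n : ℕ) : ℤ) by push_cast; ring,
        zpow_natCast, hy, one_zpow]
    have hck : (x⁻¹ * y⁻¹ * x * y) ^ k = 1 := by
      have hdk : ((p : ℤ) ^ (n - 1)) ∣ k := by
        have h' : (p : ℤ) ^ (n - 1) * (p * p) ∣ k * (p * p) := by
          rw [show (p : ℤ) ^ (n - 1) * (p * p) = (p : ℤ) ^ (n + 1) by
            simp [hn2]; ring]
          exact hdz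
        exact (mul_dvd_mul_iff_right (mul_ne_zero hp0 hp0)).mp h'
      obtain ⟨t, rfl⟩ := hdk
      rw [zpow_mul, show ((p : ℤ) ^ (n - 1)) = ((p ^ (n - 1) : ℕ) : ℤ) by push_cast; ring,
        zpow_natCast, hxy, one_zpow]
    rw [hxi, hyj, hck, one_mul, one_mul]
  have hinj : Function.Injective φ :=
    (MonoidHom.ker_eq_bot_iff φ).mp
      ((Subgroup.eq_bot_iff_forall _).mpr fun g hg => hker g hg)
  have hrange : φ.range = Subgroup.closure {a ^ p, b ^ p} := by
    rw [MonoidHom.range_eq_map, ← hGgen, MonoidHom.map_closure, Set.image_insert_eq,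
      Set.image_singleton, hφx, hφy]
  refine ⟨⟨(MonoidHom.ofInjective hinj).trans (MulEquiv.subgroupCongr hrange)⟩, ?_, ?_⟩
  · -- [a,b]^p is not in the subgroup
    intro hmem
    let T' : Subgroup (M m) :=
      { carrier := {w | (∃ t, w.x = (p : ZMod m) * t) ∧ (∃ t, w.y = (p : ZMod m) * t) ∧
          (∃ t, w.z = (p : ZMod m) * (p : ZMod m) * t)}
        one_mem' := ⟨⟨0, by simp⟩, ⟨0, by simp⟩, ⟨0, by simp⟩⟩
        mul_mem' := by
          rintro w w' ⟨⟨t1, h1'⟩, ⟨t2, h2'⟩, ⟨t3, h3'⟩⟩ ⟨⟨s1, g1⟩, ⟨s2, g2⟩, ⟨s3, g3⟩⟩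
          refine ⟨⟨t1 + s1, ?_⟩, ⟨t2 + s2, ?_⟩, ⟨t3 + s3 - t2 * s1, ?_⟩⟩
          · simp [h1', g1]; ring
          · simp [h2', g2]; ring
          · simp [h1', h2', h3', g1, g2, g3]; ring
        inv_mem' := by
          rintro w ⟨⟨t1, h1'⟩, ⟨t2, h2'⟩, ⟨t3, h3'⟩⟩
          refine ⟨⟨-t1, ?_⟩, ⟨-t2, ?_⟩, ⟨-t3 - t1 * t2, ?_⟩⟩
          · simp [h1']
          · simp [h2']
          · simp [h1', h2', h3']; ring }
    have hSle : Subgroup.closure {a ^ p, b ^ p} ≤ T'.comap ψ := by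
      apply (Subgroup.closure_le _).mpr
      rintro z (rfl | rfl)
      · show ψ (a ^ p) ∈ T'
        rw [map_pow, hψa, M.a0_pow]
        exact ⟨⟨1, by simp⟩, ⟨0, by simp⟩, ⟨0, by simp⟩⟩
      · show ψ (b ^ p) ∈ T'
        rw [map_pow, hψb, M.b0_pow]
        exact ⟨⟨0, by simp⟩, ⟨1, by simp⟩, ⟨0, by simp⟩⟩
    have hmem2 : ψ ((a⁻¹ * b⁻¹ * a * b) ^ p) ∈ T' := hSle hmem
    rw [map_pow, hψc, M.c0_pow] at hmem2
    obtain ⟨-, -, t, ht⟩ := hmem2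
    obtain ⟨t', rfl⟩ := ZMod.intCast_surjective t
    have ht' : ((p : ℕ) : ZMod m) = ((p : ℕ) : ZMod m) * ((p : ℕ) : ZMod m) * ((t' : ℤ) : ZMod m) := ht
    have hcast : (((p : ℤ) - p * p * t' : ℤ) : ZMod m) = 0 := by
      push_cast
      rw [show ((p : ZMod m) - (p : ZMod m) * (p : ZMod m) * ((t' : ℤ) : ZMod m) : ZMod m)
          = ((p : ℕ) : ZMod m) - ((p : ℕ) : ZMod m) * ((p : ℕ) : ZMod m) * ((t' : ℤ) : ZMod m)
        from rfl, ← ht']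
      simp
    have hdm : (m : ℤ) ∣ (p : ℤ) - p * p * t' :=
      (ZMod.intCast_zmod_eq_zero_iff_dvd _ _).mp hcast
    have hdvd' : (p : ℤ) * p ∣ (m : ℤ) := ⟨(p : ℤ) ^ (n - 1), by
      rw [hmdef]; push_cast; simp [hn2]; ring⟩
    have hdp : (p : ℤ) * p ∣ (p : ℤ) := by
      have h5 : (p : ℤ) * p ∣ (p : ℤ) - p * p * t' := dvd_trans hdvd' hdm
      have h6 : (p : ℤ) * p ∣ (p : ℤ) * p * t' := Dvd.intro t' rfl
      have := dvd_add h5 h6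
      simpa using this
    have hdpn : p * p ∣ p := by exact_mod_cast hdp
    have hle := Nat.le_of_dvd hp.pos hdpn
    nlinarith [hp.two_le]
  · -- dominion
    intro C _ hC2 f g hfg
    have hfa : (f a) ^ p = (g a) ^ p := by
      rw [← map_pow, ← map_pow]
      exact hfg _ (Subgroup.subset_closure (Set.mem_insert _ _))
    have hfb : (f b) ^ p = (g b) ^ p := by
      rw [← map_pow, ← map_pow]
      exact hfg _ (Subgroup.subset_closure (Set.mem_insert_of_mem _ rfl))
    have c1 := central_of_nil2 hC2 (f a) (f b)
    have c2 := central_of_nil2 hC2 (g a) (f b)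
    have c3 := central_of_nil2 hC2 (g a) (g b)
    have e1 : f ((a⁻¹ * b⁻¹ * a * b) ^ p) = ((f a)⁻¹ * (f b)⁻¹ * f a * f b) ^ p := by
      rw [map_pow, map_mul, map_mul, map_mul, map_inv, map_inv]
    have e2 : g ((a⁻¹ * b⁻¹ * a * b) ^ p) = ((g a)⁻¹ * (g b)⁻¹ * g a * g b) ^ p := by
      rw [map_pow, map_mul, map_mul, map_mul, map_inv, map_inv]
    rw [e1, e2]
    have k1 : ((f a)⁻¹ * (f b)⁻¹ * f a * f b) ^ p = (f a ^ p)⁻¹ * (f b)⁻¹ * f a ^ p * f b := by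
      have h := L4n (f a) (f b) c1 p 1
      simpa using h.symm
    have k2 : (g a ^ p)⁻¹ * (f b)⁻¹ * g a ^ p * f b = ((g a)⁻¹ * (f b)⁻¹ * g a * f b) ^ p := by
      have h := L4n (g a) (f b) c2 p 1
      simpa using h
    have k3 : ((g a)⁻¹ * (f b)⁻¹ * g a * f b) ^ p = (g a)⁻¹ * (f b ^ p)⁻¹ * g a * f b ^ p := by
      have h := L4n (g a) (f b) c2 1 p
      simpa using h.symm
    have k4 : (g a)⁻¹ * (g b ^ p)⁻¹ * g a * g b ^ p = ((g a)⁻¹ * (g b)⁻¹ * g a * g b) ^ p := by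
      have h := L4n (g a) (g b) c3 1 p
      simpa using h
    rw [k1, hfa, k2, k3, hfb, k4]
end
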